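/- arXiv:1505.05684 — 6 statements merged into one kernel-verified Lean document; each statement's English description precedes it below -/
import Mathlib

section
/- Let R ⊆ A^q be a submodule such that M = A^q/R is finitely generated as a module over A_d. Then there exist a positive integer γ, a generating set {g₁,…,g_γ} of M over A_d, and companion matrices A₁(σ₁),…,A_{n−d}(σ₁) ∈ A_d^{γ×γ} for multiplication by σ_{d+1},…,σₙ respectively, each of which is unimodular over A_d (i.e., invertible in A_d^{γ×γ}, its determinant being a unit of A_d). -/
set_option synthInstance.maxHeartbeats 1000000
set_option maxHeartbeats 1000000

noncomputable section

/-- The Laurent polynomial ring `A = ℝ[σ₁^{±1},…,σₙ^{±1}]` in `n` indeterminates,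
realized as the group algebra of `ℤⁿ` over `ℝ`. -/
abbrev LP (n : ℕ) : Type := AddMonoidAlgebra ℝ (Fin n → ℤ)

/-- The monomial `σ^ν` for `ν ∈ ℤⁿ`. -/
def mono {n : ℕ} (ν : Fin n → ℤ) : LP n := AddMonoidAlgebra.single ν 1

/-- The Laurent polynomial subring `A_d = ℝ[σ₁^{±1},…,σ_d^{±1}]` in the first `d`
indeterminates, as a subalgebra of `A`: it is generated by the monomials `σ^ν`
with `ν` supported on the first `d` coordinates. -/
def subA (n d : ℕ) : Subalgebra ℝ (LP n) :=
  Algebra.adjoin ℝ {x | ∃ ν : Fin n → ℤ, (∀ i : Fin n, d ≤ (i : ℕ) → ν i = 0) ∧ x = mono ν}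

/-- The index of the variable `σ_{d+j}` for `1 ≤ j ≤ n-d` (0-indexed: `j : Fin (n-d)`). -/
def embIdx {n : ℕ} (d : ℕ) (j : Fin (n - d)) : Fin n :=
  ⟨d + (j : ℕ), by have := j.isLt; omega⟩

/-- The variable `σ_{d+j}` as an element of `A`. -/
def sigmaVar {n : ℕ} (d : ℕ) (j : Fin (n - d)) : LP n := mono (Pi.single (embIdx d j) 1)

/-- The action of a Laurent polynomial `f ∈ A` on a scalar trajectory `w : ℤⁿ → ℝ`:
`(σ^{ν'} w)(ν) = w(ν + ν')`, extended `ℝ`-linearly. -/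
def actS {n : ℕ} (f : LP n) (w : (Fin n → ℤ) → ℝ) : (Fin n → ℤ) → ℝ :=
  fun ν => Finsupp.sum f.coeff fun μ c => c * w (ν + μ)

/-- The action of a row vector `r ∈ A^q` on a vector trajectory `w : ℤⁿ → ℝ^q`:
`r·w = Σᵢ rᵢ·wᵢ`. -/
def actRow {n q : ℕ} (r : Fin q → LP n) (w : (Fin n → ℤ) → Fin q → ℝ) : (Fin n → ℤ) → ℝ :=
  fun ν => ∑ j, actS (r j) (fun μ => w μ j) ν

/-- The componentwise action of a matrix `P ∈ A^{a×b}` on a trajectory `w : ℤⁿ → ℝ^b`. -/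
def actMat {n a b : ℕ} (P : Matrix (Fin a) (Fin b) (LP n)) (w : (Fin n → ℤ) → Fin b → ℝ) :
    (Fin n → ℤ) → Fin a → ℝ :=
  fun ν i => actRow (P i) w ν

/-- The behavior of a submodule `R ⊆ A^q`:
`B(R) = {w : ℤⁿ → ℝ^q | r·w = 0 for all r ∈ R}`. -/
def Behavior {n q : ℕ} (R : Submodule (LP n) (Fin q → LP n)) :
    Set ((Fin n → ℤ) → Fin q → ℝ) :=
  {w | ∀ r ∈ R, actRow r w = 0}

/-- A matrix `T ∈ ℤ^{n×n}` is ℤ-unimodular if `det T = ±1`. -/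
def Unimodular {n : ℕ} (T : Matrix (Fin n) (Fin n) ℤ) : Prop := T.det = 1 ∨ T.det = -1

/-- The `ℝ`-algebra endomorphism `φ_T : A → A` induced by `T ∈ ℤ^{n×n}`,
determined by `φ_T(σ^ν) = σ^{Tν}`. -/
def phiT {n : ℕ} (T : Matrix (Fin n) (Fin n) ℤ) : LP n →ₐ[ℝ] LP n :=
  AddMonoidAlgebra.mapDomainAlgHom ℝ ℝ T.mulVecLin.toAddMonoidHom

/-- The image `φ̂_T(R)` of a submodule `R ⊆ A^q` under the componentwise extension
`φ̂_T : A^q → A^q` of `φ_T` (the span is taken only to record that it is a submodule;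
for unimodular `T` the image is already a submodule). -/
def hatPhiT {n q : ℕ} (T : Matrix (Fin n) (Fin n) ℤ) (R : Submodule (LP n) (Fin q → LP n)) :
    Submodule (LP n) (Fin q → LP n) :=
  Submodule.span (LP n) ((fun r (i : Fin q) => phiT T (r i)) '' (R : Set (Fin q → LP n)))

/-- The annihilator ideal `ann(A^q/R) = {f ∈ A | f·v ∈ R for all v ∈ A^q}`. -/
def annQ {n q : ℕ} (R : Submodule (LP n) (Fin q → LP n)) : Ideal (LP n) :=
  Submodule.colon R ⊤

/-- The monomial `σ₁^{ν₁}⋯σ_d^{ν_d}` (the part of `σ^ν` in the first `d` variables),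
as an element of `A_d`. -/
def monoD (n d : ℕ) (ν : Fin n → ℤ) : subA n d :=
  ⟨mono (fun i => if (i : ℕ) < d then ν i else 0),
   Algebra.subset_adjoin
     ⟨fun i => if (i : ℕ) < d then ν i else 0, fun i hi => if_neg (by omega), rfl⟩⟩

/-- Auxiliary block-matrix identity: `[[X, 1],[YX−1, Y]]` has explicit inverse
`[[Y, −1],[1−XY, X]]`. -/
theorem auxBlocks {α ι : Type*} [CommRing α] [Fintype ι] [DecidableEq ι]
    (X Y : Matrix ι ι α) :
    Matrix.fromBlocks X 1 (Y * X - 1) Y * Matrix.fromBlocks Y (-1) (1 - X * Y) X = 1 ∧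
    Matrix.fromBlocks Y (-1) (1 - X * Y) X * Matrix.fromBlocks X 1 (Y * X - 1) Y = 1 := by
  have e1 : X * Y + 1 * (1 - X * Y) = 1 := by noncomm_ring
  have e2 : X * -1 + 1 * X = 0 := by noncomm_ring
  have e3 : (Y * X - 1) * Y + Y * (1 - X * Y) = 0 := by noncomm_ring
  have e4 : (Y * X - 1) * -1 + Y * X = 1 := by noncomm_ring
  have f1 : Y * X + -1 * (Y * X - 1) = 1 := by noncomm_ring
  have f2 : Y * 1 + -1 * Y = 0 := by noncomm_ring
  have f3 : (1 - X * Y) * X + X * (Y * X - 1) = 0 := by noncomm_ring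
  have f4 : (1 - X * Y) * 1 + X * Y = 1 := by noncomm_ring
  constructor
  · rw [Matrix.fromBlocks_multiply, e1, e2, e3, e4, Matrix.fromBlocks_one]
  · rw [Matrix.fromBlocks_multiply, f1, f2, f3, f4, Matrix.fromBlocks_one]

/-- Existence of a generating set with invertible companion matrices. -/
theorem stmt1 (n d q : ℕ) (R : Submodule (LP n) (Fin q → LP n))
    (hfg : Module.Finite (subA n d) ((Fin q → LP n) ⧸ R)) :
    ∃ γ : ℕ, 0 < γ ∧ ∃ g : Fin γ → (Fin q → LP n) ⧸ R,
      Submodule.span (subA n d) (Set.range g) = ⊤ ∧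
      ∃ A : Fin (n - d) → Matrix (Fin γ) (Fin γ) (subA n d),
        (∀ j : Fin (n - d), ∀ i : Fin γ, sigmaVar d j • g i = ∑ k, A j i k • g k) ∧
        ∀ j : Fin (n - d), IsUnit (A j) := by
  classical
  obtain ⟨m0, g0, hg0⟩ := Module.Finite.exists_fin (R := subA n d)
    (M := (Fin q → LP n) ⧸ R)
  -- pad with a zero to make the family nonempty
  have hhspan : Submodule.span (subA n d)
      (Set.range (Fin.cons 0 g0 : Fin (m0 + 1) → (Fin q → LP n) ⧸ R)) = ⊤ := by
    rw [Fin.range_cons, Submodule.span_insert_zero, hg0]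
  set m := m0 + 1 with hm
  set h : Fin m → (Fin q → LP n) ⧸ R := Fin.cons 0 g0 with hh
  -- inverse variables
  have hinv : ∀ j : Fin (n - d),
      mono (-(Pi.single (embIdx d j) 1)) * sigmaVar d j = 1 := by
    intro j
    rw [sigmaVar, mono, mono, AddMonoidAlgebra.single_mul_single]
    simp [AddMonoidAlgebra.one_def]
  -- companion coefficients for σ and σ⁻¹
  have hX : ∀ (j : Fin (n - d)) (i : Fin m), ∃ c : Fin m → subA n d,
      ∑ k, c k • h k = sigmaVar d j • h i := fun j i =>
    (Submodule.mem_span_range_iff_exists_fun (subA n d)).1 (hhspan ▸ Submodule.mem_top)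
  have hY : ∀ (j : Fin (n - d)) (i : Fin m), ∃ c : Fin m → subA n d,
      ∑ k, c k • h k = mono (-(Pi.single (embIdx d j) 1)) • h i := fun j i =>
    (Submodule.mem_span_range_iff_exists_fun (subA n d)).1 (hhspan ▸ Submodule.mem_top)
  choose X hX using hX
  choose Y hY using hY
  set Xm : Fin (n - d) → Matrix (Fin m) (Fin m) (subA n d) := fun j => Matrix.of (X j)
    with hXm
  set Ym : Fin (n - d) → Matrix (Fin m) (Fin m) (subA n d) := fun j => Matrix.of (Y j)
    with hYm
  -- key identity : (Y*X) h = h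
  have key : ∀ (j : Fin (n - d)) (i : Fin m),
      ∑ l, (Ym j * Xm j) i l • h l = h i := by
    intro j i
    have h1 : h i = sigmaVar d j • (mono (-(Pi.single (embIdx d j) 1)) • h i) := by
      rw [smul_smul, mul_comm, hinv j, one_smul]
    calc ∑ l, (Ym j * Xm j) i l • h l
        = ∑ l, ∑ k, (Y j i k * X j k l) • h l := by
          refine Finset.sum_congr rfl fun l _ => ?_
          rw [Matrix.mul_apply, Finset.sum_smul]
          rfl
      _ = ∑ k, Y j i k • ∑ l, X j k l • h l := by
          rw [Finset.sum_comm]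
          exact Finset.sum_congr rfl fun k _ => by
            rw [Finset.smul_sum]
            exact Finset.sum_congr rfl fun l _ => by rw [mul_smul]
      _ = ∑ k, Y j i k • (sigmaVar d j • h k) := by
          exact Finset.sum_congr rfl fun k _ => by rw [hX j k]
      _ = sigmaVar d j • ∑ k, Y j i k • h k := by
          rw [Finset.smul_sum]
          exact Finset.sum_congr rfl fun k _ => (smul_comm _ _ _)
      _ = h i := by rw [hY j i, ← h1]
  -- doubled generating family over Fin m ⊕ Fin m
  set G : Fin m ⊕ Fin m → (Fin q → LP n) ⧸ R := Sum.elim h (fun _ => 0) with hG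
  set Ab : Fin (n - d) → Matrix (Fin m ⊕ Fin m) (Fin m ⊕ Fin m) (subA n d) :=
    fun j => Matrix.fromBlocks (Xm j) 1 (Ym j * Xm j - 1) (Ym j) with hAb
  have hUnit : ∀ j, IsUnit (Ab j) := fun j =>
    ⟨⟨Ab j, Matrix.fromBlocks (Ym j) (-1) (1 - Xm j * Ym j) (Xm j),
      (auxBlocks (Xm j) (Ym j)).1, (auxBlocks (Xm j) (Ym j)).2⟩, rfl⟩
  have hcomp : ∀ (j : Fin (n - d)) (i : Fin m ⊕ Fin m),
      sigmaVar d j • G i = ∑ k, Ab j i k • G k := by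
    intro j i
    rw [Fintype.sum_sum_type]
    cases i with
    | inl a =>
        have h0 : ∀ k : Fin m, Ab j (Sum.inl a) (Sum.inl k) = X j a k := fun k => rfl
        simp only [hG, Sum.elim_inl, Sum.elim_inr, smul_zero, Finset.sum_const_zero,
          add_zero]
        rw [← hX j a]
        exact Finset.sum_congr rfl fun k _ => by rw [h0 k]
    | inr a =>
        simp only [hG, Sum.elim_inl, Sum.elim_inr, smul_zero, Finset.sum_const_zero,
          add_zero]
        have h2 : ∀ k : Fin m,
            Ab j (Sum.inr a) (Sum.inl k)
              = (Ym j * Xm j) a k - (1 : Matrix (Fin m) (Fin m) (subA n d)) a k :=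
          fun k => rfl
        have h3 : ∑ k, (1 : Matrix (Fin m) (Fin m) (subA n d)) a k • h k = h a := by
          rw [Finset.sum_eq_single a]
          · rw [Matrix.one_apply_eq, one_smul]
          · intro b _ hb; rw [Matrix.one_apply_ne' hb, zero_smul]
          · intro hb; exact absurd (Finset.mem_univ a) hb
        calc (0 : (Fin q → LP n) ⧸ R)
            = ∑ k, (Ym j * Xm j) a k • h k
              - ∑ k, (1 : Matrix (Fin m) (Fin m) (subA n d)) a k • h k := by
              rw [key j a, h3, sub_self]
          _ = ∑ k, Ab j (Sum.inr a) (Sum.inl k) • h k := by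
              rw [← Finset.sum_sub_distrib]
              exact (Finset.sum_congr rfl fun k _ => by rw [h2 k, sub_smul]).symm
  -- transport along finSumFinEquiv
  set e : Fin m ⊕ Fin m ≃ Fin (m + m) := finSumFinEquiv with he
  refine ⟨m + m, by omega, G ∘ e.symm, ?_, fun j => (Ab j).submatrix e.symm e.symm, ?_, ?_⟩
  · rw [Set.range_comp, Set.range_eq_univ.2 e.symm.surjective, Set.image_univ,
      hG, Set.Sum.elim_range]
    refine top_unique ?_
    rw [← hhspan]
    exact Submodule.span_mono Set.subset_union_left
  · intro j i
    rw [show (G ∘ e.symm) i = G (e.symm i) from rfl, hcomp j (e.symm i)]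
    refine Fintype.sum_equiv e _ _ fun k => ?_
    simp only [Matrix.submatrix_apply, Equiv.symm_apply_apply, Function.comp_apply]
  · intro j
    have h3 := (hUnit j).map (Matrix.reindexAlgEquiv (subA n d) (subA n d) e)
    rwa [Matrix.reindexAlgEquiv_apply, Matrix.reindex_apply] at h3
end
end

section
/- Let R ⊆ A^q be a submodule such that M = A^q/R is finitely generated as an A_d-module, let {g₁,…,g_γ} be a generating set with associated surjection ψ : A_d^γ → M, let A₁(σ₁),…,A_{n−d}(σ₁) ∈ A_d^{γ×γ} be companion matrices for multiplication by σ_{d+1},…,σₙ, each invertible over A_d, and let X(σ₁) ∈ A_d^{δ×γ} be a matrix of relations. Then for every (ν₁,…,ν_{n−d}) ∈ ℤ^{n−d} there exists a matrix E(σ₁) ∈ A_d^{δ×δ} such that X(σ₁)·Π_{j=1}^{n−d} A_j(σ₁)^{ν_j} = E(σ₁)·X(σ₁). -/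
set_option synthInstance.maxHeartbeats 1000000
set_option maxHeartbeats 1000000

noncomputable section

/-- Intertwining of the relation matrix with integer powers of the
companion matrices. -/
theorem stmt2 (n d q γ δ : ℕ) (R : Submodule (LP n) (Fin q → LP n))
    (hfg : Module.Finite (subA n d) ((Fin q → LP n) ⧸ R))
    (g : Fin γ → (Fin q → LP n) ⧸ R)
    (hgen : Submodule.span (subA n d) (Set.range g) = ⊤)
    (A : Fin (n - d) → (Matrix (Fin γ) (Fin γ) (subA n d))ˣ)
    (hA : ∀ j : Fin (n - d), ∀ i : Fin γ,
      sigmaVar d j • g i = ∑ k, ((A j : Matrix (Fin γ) (Fin γ) (subA n d)) i k) • g k)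
    (X : Matrix (Fin δ) (Fin γ) (subA n d))
    (hX : ∀ r : Fin γ → subA n d,
      (∑ i, r i • g i) = 0 ↔ r ∈ Submodule.span (subA n d) (Set.range fun i : Fin δ => X i)) :
    ∀ ν : Fin (n - d) → ℤ, ∃ E : Matrix (Fin δ) (Fin δ) (subA n d),
      X * (((List.ofFn fun j => A j ^ ν j).prod : (Matrix (Fin γ) (Fin γ) (subA n d))ˣ) :
          Matrix (Fin γ) (Fin γ) (subA n d)) = E * X := by
  classical
  intro ν
  -- The evaluation map `G r = ∑ i, r i • g i`
  set G : (Fin γ → subA n d) → ((Fin q → LP n) ⧸ R) := fun r => ∑ i, r i • g i with hG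
  -- monomials act invertibly
  have hcancel : ∀ (μ : Fin n → ℤ) (x : (Fin q → LP n) ⧸ R), mono μ • x = 0 → x = 0 := by
    intro μ x hx
    have h1 : (mono (-μ) : LP n) * mono μ = 1 := by
      simp only [mono, AddMonoidAlgebra.single_mul_single, neg_add_cancel, one_mul]
      rfl
    have h2 : mono (-μ) • mono μ • x = x := by
      rw [smul_smul, h1, one_smul]
    rw [hx, smul_zero] at h2
    exact h2.symm
  -- the companion matrix realizes multiplication by σ_{d+j}
  have hstep : ∀ (j : Fin (n - d)) (r : Fin γ → subA n d),
      G (Matrix.vecMul r ((A j : Matrix (Fin γ) (Fin γ) (subA n d)))) = sigmaVar d j • G r := by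
    intro j r
    simp only [hG, Matrix.vecMul, dotProduct]
    rw [Finset.smul_sum]
    calc ∑ k, (∑ i, r i * (A j : Matrix (Fin γ) (Fin γ) (subA n d)) i k) • g k
        = ∑ k, ∑ i, (r i * (A j : Matrix (Fin γ) (Fin γ) (subA n d)) i k) • g k := by
          simp [Finset.sum_smul]
      _ = ∑ i, ∑ k, (r i * (A j : Matrix (Fin γ) (Fin γ) (subA n d)) i k) • g k :=
          Finset.sum_comm
      _ = ∑ i, r i • ∑ k, (A j : Matrix (Fin γ) (Fin γ) (subA n d)) i k • g k := by
          simp [Finset.smul_sum, mul_smul]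
      _ = ∑ i, r i • (sigmaVar d j • g i) :=
          Finset.sum_congr rfl fun i _ => by rw [← hA j i]
      _ = ∑ i, sigmaVar d j • (r i • g i) := by
          refine Finset.sum_congr rfl fun i _ => ?_
          rw [Subalgebra.smul_def, Subalgebra.smul_def, smul_comm]
  -- matrices preserving the kernel of G
  set pres : Matrix (Fin γ) (Fin γ) (subA n d) → Prop :=
    fun P => ∀ r, G r = 0 → G (Matrix.vecMul r P) = 0 with hpres
  have pres_one : pres 1 := fun r hr => by rwa [Matrix.vecMul_one]
  have pres_mul : ∀ {P Q}, pres P → pres Q → pres (P * Q) := by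
    intro P Q hP hQ r hr
    rw [← Matrix.vecMul_vecMul]
    exact hQ _ (hP _ hr)
  have presA : ∀ j, pres ((A j : Matrix (Fin γ) (Fin γ) (subA n d))) := by
    intro j r hr
    rw [hstep j r, hr, smul_zero]
  have presAinv : ∀ j, pres (((A j)⁻¹ : (Matrix (Fin γ) (Fin γ) (subA n d))ˣ) :
      Matrix (Fin γ) (Fin γ) (subA n d)) := by
    intro j r hr
    set s := Matrix.vecMul r (((A j)⁻¹ : (Matrix (Fin γ) (Fin γ) (subA n d))ˣ) :
      Matrix (Fin γ) (Fin γ) (subA n d)) with hs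
    have h1 : Matrix.vecMul s ((A j : Matrix (Fin γ) (Fin γ) (subA n d))) = r := by
      rw [hs, Matrix.vecMul_vecMul, ← Units.val_mul, inv_mul_cancel, Units.val_one,
        Matrix.vecMul_one]
    have h2 : sigmaVar d j • G s = 0 := by rw [← hstep j s, h1, hr]
    exact hcancel _ _ h2
  -- integer powers preserve the kernel
  have presPow : ∀ (j : Fin (n - d)) (m : ℤ),
      pres (((A j ^ m : (Matrix (Fin γ) (Fin γ) (subA n d))ˣ)) :
        Matrix (Fin γ) (Fin γ) (subA n d)) := by
    intro j m
    induction m using Int.induction_on with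
    | zero => simpa using pres_one
    | succ k ih =>
        rw [zpow_add_one, Units.val_mul]
        exact pres_mul ih (presA j)
    | pred k ih =>
        rw [zpow_sub_one, Units.val_mul]
        exact pres_mul ih (presAinv j)
  -- products of kernel-preserving matrices preserve the kernel
  have presList : ∀ L : List ((Matrix (Fin γ) (Fin γ) (subA n d))ˣ),
      (∀ U ∈ L, pres (U : Matrix (Fin γ) (Fin γ) (subA n d))) →
      pres ((L.prod : (Matrix (Fin γ) (Fin γ) (subA n d))ˣ) :
        Matrix (Fin γ) (Fin γ) (subA n d)) := by
    intro L
    induction L with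
    | nil => intro _; simpa using pres_one
    | cons U L ih =>
        intro h
        rw [List.prod_cons, Units.val_mul]
        exact pres_mul (h U List.mem_cons_self) (ih fun V hV => h V (List.mem_cons_of_mem U hV))
  set U : (Matrix (Fin γ) (Fin γ) (subA n d))ˣ := (List.ofFn fun j => A j ^ ν j).prod with hU
  have presU : pres (U : Matrix (Fin γ) (Fin γ) (subA n d)) := by
    refine presList _ ?_
    intro V hV
    rw [List.mem_ofFn] at hV
    obtain ⟨j, rfl⟩ := hV
    exact presPow j (ν j)
  -- each row of X is a relation
  have hrow : ∀ l : Fin δ, G (X l) = 0 := fun l =>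
    (hX (X l)).mpr (Submodule.subset_span ⟨l, rfl⟩)
  -- produce coefficients
  have hmem : ∀ l : Fin δ, ∃ c : Fin δ → subA n d,
      ∑ m, c m • X m = Matrix.vecMul (X l) (U : Matrix (Fin γ) (Fin γ) (subA n d)) := by
    intro l
    have := (hX _).mp (presU (X l) (hrow l))
    exact (Submodule.mem_span_range_iff_exists_fun _).mp this
  choose c hc using hmem
  refine ⟨fun l m => c l m, ?_⟩
  apply Matrix.ext
  intro l k
  have h3 := congrFun (hc l) k
  simp only [Finset.sum_apply, Pi.smul_apply, smul_eq_mul, Matrix.vecMul,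
    dotProduct] at h3
  rw [Matrix.mul_apply]
  exact h3.symm
end
end

section
/- Let R ⊆ A^q be a submodule and 0 ≤ d ≤ n. The following are equivalent: (1) A^q/R is finitely generated as a module over A_d; (2) for every 1 ≤ i ≤ n−d there exist a positive integer L_i and elements a_{i,0},…,a_{i,L_i−1} ∈ A_d with a_{i,0} a unit of A_d such that the polynomial p_i := σ_{d+i}^{L_i} + a_{i,L_i−1}σ_{d+i}^{L_i−1} + ⋯ + a_{i,1}σ_{d+i} + a_{i,0} belongs to ann(A^q/R); (3) for every 1 ≤ i ≤ n−d there exists a polynomial p_i of the same form (with a_{i,j} ∈ A_d and a_{i,0} a unit of A_d) such that p_i·e_j ∈ R for every standard basis row vector e_j of A^q, 1 ≤ j ≤ q. -/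
set_option synthInstance.maxHeartbeats 1000000
set_option maxHeartbeats 1000000

noncomputable section

section Aux
variable {n d q : ℕ} {R : Submodule (LP n) (Fin q → LP n)}

lemma mono_mul (ν μ : Fin n → ℤ) : mono ν * mono μ = mono (ν + μ) := by
  simp [mono, AddMonoidAlgebra.single_mul_single]

lemma mono_zero : mono (0 : Fin n → ℤ) = 1 := rfl

lemma mono_pow (ν : Fin n → ℤ) (t : ℕ) : mono ν ^ t = mono ((t : ℤ) • ν) := by
  induction t with
  | zero => simp [mono_zero]
  | succ t ih =>
    rw [pow_succ, ih, mono_mul]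
    congr 1
    push_cast
    module

lemma mem_annQ {f : LP n} :
    f ∈ annQ R ↔ ∀ m : (Fin q → LP n) ⧸ R, f • m = 0 := by
  rw [annQ, Submodule.mem_colon]
  constructor
  · intro h m
    obtain ⟨v, rfl⟩ := Submodule.Quotient.mk_surjective R m
    rw [← Submodule.Quotient.mk_smul, Submodule.Quotient.mk_eq_zero]
    exact h v trivial
  · intro h v _
    have := h (Submodule.Quotient.mk v)
    rwa [← Submodule.Quotient.mk_smul, Submodule.Quotient.mk_eq_zero] at this

lemma pi_single_smul (c : LP n) (k : Fin q) :
    c • (Pi.single k 1 : Fin q → LP n) = Pi.single k c := by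
  funext j
  simp [Pi.single_apply, Pi.smul_apply, mul_ite]

lemma pi_eq_sum (v : Fin q → LP n) :
    v = ∑ k, (v k) • (Pi.single k 1 : Fin q → LP n) := by
  conv_lhs => rw [← Finset.univ_sum_single v]
  exact Finset.sum_congr rfl fun k _ => (pi_single_smul (v k) k).symm

lemma mem_annQ_single {f : LP n} :
    f ∈ annQ R ↔ ∀ k : Fin q, f • (Pi.single k 1 : Fin q → LP n) ∈ R := by
  constructor
  · intro h k
    exact Submodule.mem_colon.mp h _ trivial
  · intro h
    rw [annQ]
    rw [Submodule.mem_colon]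
    intro v _
    rw [pi_eq_sum v, Finset.smul_sum]
    refine Submodule.sum_mem _ fun k _ => ?_
    rw [smul_comm]
    exact Submodule.smul_mem _ _ (h k)

end Aux
section CH
variable {n d q : ℕ} {R : Submodule (LP n) (Fin q → LP n)}

lemma coe_algebraMap_subA (s : subA n d) : algebraMap (subA n d) (LP n) s = (s : LP n) := rfl

lemma sigmaVar_def (j : Fin (n - d)) : sigmaVar d j = mono (Pi.single (embIdx d j) 1) := rfl

lemma ch_poly (hfin : Module.Finite (subA n d) ((Fin q → LP n) ⧸ R)) (u : LP n) :
    ∃ (L : ℕ) (c : ℕ → subA n d), 0 < L ∧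
      u ^ L + ∑ j ∈ Finset.range L, (c j : LP n) * u ^ j ∈ annQ R := by
  set S := subA n d
  set M := (Fin q → LP n) ⧸ R
  obtain ⟨p, hmon, hz⟩ := LinearMap.exists_monic_and_aeval_eq_zero S
    (Algebra.lsmul S S M u : Module.End S M)
  set p' := p * Polynomial.X with hp'
  have hmon' : p'.Monic := hmon.mul Polynomial.monic_X
  have hL : p'.natDegree = p.natDegree + 1 := Polynomial.natDegree_mul_X hmon.ne_zero
  refine ⟨p'.natDegree, fun j => p'.coeff j, by omega, ?_⟩
  have hz' : Polynomial.aeval (Algebra.lsmul S S M u : Module.End S M) p' = 0 := by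
    rw [hp', map_mul, hz, zero_mul]
  have key : Polynomial.aeval u p' ∈ annQ R := by
    rw [mem_annQ]
    intro m
    have := Polynomial.aeval_algHom_apply (Algebra.lsmul S S M) u p'
    rw [this] at hz'
    have h2 := congrFun (congrArg DFunLike.coe hz') m
    exact h2
  have expand : Polynomial.aeval u p'
      = u ^ p'.natDegree + ∑ j ∈ Finset.range p'.natDegree, (p'.coeff j : LP n) * u ^ j := by
    rw [Polynomial.aeval_eq_sum_range, Finset.sum_range_succ, hmon'.coeff_natDegree, one_smul,
      add_comm]
    congr 1
  exact expand ▸ key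

lemma sigma_tau_pow {σ τ : LP n} (h : σ * τ = 1) {j K : ℕ} (hj : j ≤ K) :
    σ ^ K * τ ^ j = σ ^ (K - j) := by
  have : σ ^ K = σ ^ (K - j) * σ ^ j := by rw [← pow_add]; congr 1; omega
  rw [this, mul_assoc, ← mul_pow, h, one_pow, mul_one]

lemma combine {σ τ : LP n} (hστ : σ * τ = 1) (L K : ℕ) (a b : ℕ → subA n d)
    (hP : σ ^ L + ∑ j ∈ Finset.range L, (a j : LP n) * σ ^ j ∈ annQ R)
    (hQ : τ ^ K + ∑ j ∈ Finset.range K, (b j : LP n) * τ ^ j ∈ annQ R) :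
    ∃ c : ℕ → subA n d, IsUnit (c 0) ∧
      σ ^ (K + 1 + L) + ∑ m ∈ Finset.range (K + 1 + L), (c m : LP n) * σ ^ m ∈ annQ R := by
  classical
  set c : ℕ → subA n d :=
    fun m => if m = 0 then 1 else if m ≤ K then b (K - m) else a (m - (K + 1)) with hc_def
  refine ⟨c, by simp [hc_def], ?_⟩
  have hc_app : ∀ m : ℕ, (c m : LP n)
      = if m = 0 then 1 else if m ≤ K then (b (K - m) : LP n) else (a (m - (K + 1)) : LP n) := by
    intro m; simp only [hc_def]; split_ifs <;> simp
  have hmem : σ ^ (K + 1) * (σ ^ L + ∑ j ∈ Finset.range L, (a j : LP n) * σ ^ j)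
      + σ ^ K * (τ ^ K + ∑ j ∈ Finset.range K, (b j : LP n) * τ ^ j) ∈ annQ R :=
    Ideal.add_mem _ (Ideal.mul_mem_left _ _ hP) (Ideal.mul_mem_left _ _ hQ)
  have heq : σ ^ (K + 1 + L) + ∑ m ∈ Finset.range (K + 1 + L),
      (if m = 0 then (1 : LP n) else if m ≤ K then (b (K - m) : LP n)
        else (a (m - (K + 1)) : LP n)) * σ ^ m
      = σ ^ (K + 1) * (σ ^ L + ∑ j ∈ Finset.range L, (a j : LP n) * σ ^ j)
      + σ ^ K * (τ ^ K + ∑ j ∈ Finset.range K, (b j : LP n) * τ ^ j) := by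
    rw [mul_add, mul_add, Finset.mul_sum, Finset.mul_sum]
    have e1 : σ ^ (K + 1) * σ ^ L = σ ^ (K + 1 + L) := by rw [← pow_add]
    have e2 : σ ^ K * τ ^ K = 1 := by rw [← mul_pow, hστ, one_pow]
    have e3 : ∀ j ∈ Finset.range L,
        σ ^ (K + 1) * ((a j : LP n) * σ ^ j) = (a j : LP n) * σ ^ (K + 1 + j) := by
      intro j _; rw [pow_add]; ring
    have e4 : ∀ j ∈ Finset.range K,
        σ ^ K * ((b j : LP n) * τ ^ j) = (b j : LP n) * σ ^ (K - j) := by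
      intro j hj
      rw [Finset.mem_range] at hj
      rw [← sigma_tau_pow hστ (le_of_lt hj)]; ring
    rw [e1, e2, Finset.sum_congr rfl e3, Finset.sum_congr rfl e4]
    have split : ∑ m ∈ Finset.range (K + 1 + L),
        (if m = 0 then (1 : LP n) else if m ≤ K then (b (K - m) : LP n)
          else (a (m - (K + 1)) : LP n)) * σ ^ m
        = (1 + ∑ i ∈ Finset.range K, (b (K - 1 - i) : LP n) * σ ^ (i + 1))
          + ∑ i ∈ Finset.range L, (a i : LP n) * σ ^ (K + 1 + i) := by
      rw [Finset.sum_range_add]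
      congr 1
      · rw [Finset.sum_range_succ']
        rw [add_comm]
        congr 1
        · simp
        · refine Finset.sum_congr rfl fun i hi => ?_
          rw [Finset.mem_range] at hi
          rw [if_neg (by omega), if_pos (by omega)]
          have : K - (i + 1) = K - 1 - i := by omega
          rw [this]
      · refine Finset.sum_congr rfl fun i _ => ?_
        rw [if_neg (by omega), if_neg (by omega)]
        have : K + 1 + i - (K + 1) = i := by omega
        rw [this]
    rw [split]
    have hrefl : ∑ i ∈ Finset.range K, (b (K - 1 - i) : LP n) * σ ^ (i + 1)
        = ∑ j ∈ Finset.range K, (b j : LP n) * σ ^ (K - j) := by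
      rw [← Finset.sum_range_reflect]
      refine Finset.sum_congr rfl fun i hi => ?_
      rw [Finset.mem_range] at hi
      have h1 : K - 1 - i + 1 = K - i := by omega
      have h2 : K - 1 - (K - 1 - i) = i := by omega
      rw [h1, h2]
    rw [hrefl]
    ring
  simp only [hc_app]
  rw [heq]
  exact hmem

lemma dir12 (hfin : Module.Finite (subA n d) ((Fin q → LP n) ⧸ R)) (i : Fin (n - d)) :
    ∃ L : ℕ, 0 < L ∧ ∃ a : ℕ → subA n d, IsUnit (a 0) ∧
      (sigmaVar d i) ^ L + ∑ j ∈ Finset.range L, (a j : LP n) * (sigmaVar d i) ^ j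
        ∈ annQ R := by
  set σ := sigmaVar d i with hσ
  set τ := mono (-(Pi.single (embIdx d i) 1)) with hτ
  have hστ : σ * τ = 1 := by
    rw [hσ, hτ, sigmaVar_def, mono_mul]
    simp [mono_zero]
  obtain ⟨L, a, hLpos, hP⟩ := ch_poly hfin σ
  obtain ⟨K, b, hKpos, hQ⟩ := ch_poly hfin τ
  obtain ⟨c, hc0, hc⟩ := combine hστ L K a b hP hQ
  exact ⟨K + 1 + L, by omega, c, hc0, hc⟩

end CH
section Fin21
variable {n d q : ℕ} {R : Submodule (LP n) (Fin q → LP n)}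

lemma dir21
    (hyp : ∀ i : Fin (n - d), ∃ L : ℕ, 0 < L ∧ ∃ a : ℕ → subA n d, IsUnit (a 0) ∧
      (sigmaVar d i) ^ L + ∑ j ∈ Finset.range L, (a j : LP n) * (sigmaVar d i) ^ j ∈ annQ R) :
    Module.Finite (subA n d) ((Fin q → LP n) ⧸ R) := by
  classical
  choose L hL a ha0 hann using hyp
  have hidx : ∀ i : Fin n, ¬ ((i:ℕ) < d) → (i:ℕ) - d < n - d := fun i h => by
    have := i.isLt; omega
  set B : Fin n → ℕ := fun i => if h : (i:ℕ) < d then 1 else L ⟨(i:ℕ) - d, hidx i h⟩ with hB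
  have hBpos : ∀ i, 0 < B i := by
    intro i; rw [hB]; dsimp only; split
    · norm_num
    · exact hL _
  have hBidx : ∀ j : Fin (n - d), B (embIdx d j) = L j := by
    intro j
    rw [hB]; dsimp only
    rw [dif_neg (by simp only [embIdx]; omega)]
    congr 1
    apply Fin.ext
    simp [embIdx]
  set Box : Set (Fin n → ℤ) := Set.pi Set.univ (fun i => Set.Ico (0:ℤ) ((B i : ℤ))) with hBox
  set G : Set ((Fin q → LP n) ⧸ R) :=
    (fun p : (Fin n → ℤ) × Fin q =>
      mono p.1 • (Submodule.Quotient.mk (Pi.single p.2 1))) '' (Box ×ˢ Set.univ) with hG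
  have hGfin : G.Finite :=
    Set.Finite.image _ ((Set.Finite.pi fun _ => Set.finite_Ico _ _).prod Set.finite_univ)
  set N : Submodule (subA n d) ((Fin q → LP n) ⧸ R) := Submodule.span (subA n d) G with hN
  have genmem : ∀ μ : Fin n → ℤ, (∀ i, 0 ≤ μ i ∧ μ i < (B i : ℤ)) → ∀ k : Fin q,
      mono μ • (Submodule.Quotient.mk (Pi.single k 1) : (Fin q → LP n) ⧸ R) ∈ N := by
    intro μ hμ k
    refine Submodule.subset_span ⟨(μ, k), ?_, rfl⟩
    refine ⟨?_, trivial⟩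
    intro i _
    exact hμ i
  have coeS : ∀ (s : subA n d) (y : (Fin q → LP n) ⧸ R), (s : LP n) • y = s • y :=
    fun s y => algebraMap_smul (LP n) s y
  have smul_smul_mono : ∀ (ν μ : Fin n → ℤ) (x : (Fin q → LP n) ⧸ R),
      mono ν • mono μ • x = mono (ν + μ) • x := by
    intro ν μ x; rw [← mul_smul, mono_mul]
  have zsingle : ∀ (idx : Fin n) (t : ℤ), t • (Pi.single idx (1:ℤ) : Fin n → ℤ) = (Pi.single idx t : Fin n → ℤ) := by
    intro idx t; funext i
    by_cases hi : i = idx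
    · subst hi; simp
    · simp [Pi.single_eq_of_ne hi]
  have sig_pow_smul : ∀ (j : Fin (n - d)) (t : ℕ) (μ : Fin n → ℤ)
      (x : (Fin q → LP n) ⧸ R),
      (sigmaVar d j) ^ t • mono μ • x = mono (Pi.single (embIdx d j) (t:ℤ) + μ) • x := by
    intro j t μ x
    rw [sigmaVar_def, mono_pow, smul_smul_mono, zsingle]
  have hannM : ∀ (j : Fin (n - d)) (m : (Fin q → LP n) ⧸ R),
      (sigmaVar d j) ^ (L j) • m
        = - ∑ t ∈ Finset.range (L j), ((a j t : LP n) * (sigmaVar d j) ^ t) • m := by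
    intro j m
    have h0 := mem_annQ.mp (hann j) m
    rw [add_smul, Finset.sum_smul] at h0
    exact eq_neg_of_add_eq_zero_left h0
  have boxsingle : ∀ (j : Fin (n - d)) (c : ℤ) (μ : Fin n → ℤ),
      (∀ i, 0 ≤ μ i ∧ μ i < (B i : ℤ)) → μ (embIdx d j) = 0 →
      0 ≤ c → c < (L j : ℤ) →
      ∀ i, 0 ≤ ((Pi.single (embIdx d j) c : Fin n → ℤ) + μ) i ∧
        ((Pi.single (embIdx d j) c : Fin n → ℤ) + μ) i < (B i : ℤ) := by
    intro j c μ hμ h0 hc1 hc2 i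
    rcases eq_or_ne i (embIdx d j) with h | h
    · subst h
      rw [Pi.add_apply, Pi.single_eq_same, h0, add_zero, hBidx j]
      exact ⟨hc1, hc2⟩
    · rw [Pi.add_apply, Pi.single_eq_of_ne h, zero_add]
      exact hμ i
  -- closure under multiplication by σ_{d+j}
  have up : ∀ (j : Fin (n - d)) (x : (Fin q → LP n) ⧸ R), x ∈ N → sigmaVar d j • x ∈ N := by
    intro j x hx
    induction hx using Submodule.span_induction with
    | mem y hy =>
      obtain ⟨⟨μ, k⟩, hmemy, rfl⟩ := hy
      have hμ : ∀ i, 0 ≤ μ i ∧ μ i < (B i : ℤ) := fun i => hmemy.1 i (Set.mem_univ i)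
      dsimp only
      rw [sigmaVar_def, smul_smul_mono]
      by_cases hcase : μ (embIdx d j) + 1 < (L j : ℤ)
      · apply genmem _ _ k
        intro i
        rcases eq_or_ne i (embIdx d j) with h | h
        · subst h
          rw [Pi.add_apply, Pi.single_eq_same, hBidx j]
          have := (hμ (embIdx d j)).1
          constructor <;> omega
        · rw [Pi.add_apply, Pi.single_eq_of_ne h, zero_add]
          exact hμ i
      · have hμidx : μ (embIdx d j) = (L j : ℤ) - 1 := by
          have h1 := (hμ (embIdx d j)).2
          rw [hBidx j] at h1
          omega
        set μ'' := Function.update μ (embIdx d j) 0 with hμ''def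
        have hμ''prop : ∀ i, 0 ≤ μ'' i ∧ μ'' i < (B i : ℤ) := by
          intro i
          rcases eq_or_ne i (embIdx d j) with h | h
          · subst h
            rw [hμ''def, Function.update_self]
            exact ⟨le_refl 0, by exact_mod_cast hBpos _⟩
          · rw [hμ''def, Function.update_of_ne h]
            exact hμ i
        have hμ''0 : μ'' (embIdx d j) = 0 := by rw [hμ''def, Function.update_self]
        have key1 : Pi.single (embIdx d j) (1:ℤ) + μ
            = Pi.single (embIdx d j) ((L j : ℕ) : ℤ) + μ'' := by
          funext i
          rcases eq_or_ne i (embIdx d j) with h | h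
          · subst h
            rw [Pi.add_apply, Pi.add_apply, Pi.single_eq_same, Pi.single_eq_same, hμidx, hμ''0]
            ring
          · rw [Pi.add_apply, Pi.add_apply, Pi.single_eq_of_ne h, Pi.single_eq_of_ne h,
              hμ''def, Function.update_of_ne h]
        rw [key1, ← sig_pow_smul, hannM j]
        refine N.neg_mem (Submodule.sum_mem _ fun t ht => ?_)
        rw [Finset.mem_range] at ht
        rw [mul_smul, sig_pow_smul, coeS]
        refine N.smul_mem _ (genmem _ ?_ k)
        exact boxsingle j t μ'' hμ''prop hμ''0 (Int.ofNat_nonneg t) (by exact_mod_cast ht)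
    | zero => simpa using N.zero_mem
    | add y z _ _ ihy ihz => rw [smul_add]; exact N.add_mem ihy ihz
    | smul s y _ ih =>
      rw [← coeS, ← mul_smul, mul_comm, mul_smul, coeS]
      exact N.smul_mem s ih
  -- closure under multiplication by σ_{d+j}⁻¹
  have down : ∀ (j : Fin (n - d)) (x : (Fin q → LP n) ⧸ R), x ∈ N →
      mono (-Pi.single (embIdx d j) 1) • x ∈ N := by
    intro j x hx
    induction hx using Submodule.span_induction with
    | mem y hy =>
      obtain ⟨⟨μ, k⟩, hmemy, rfl⟩ := hy
      have hμ : ∀ i, 0 ≤ μ i ∧ μ i < (B i : ℤ) := fun i => hmemy.1 i (Set.mem_univ i)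
      dsimp only
      rw [smul_smul_mono]
      by_cases hcase : 0 < μ (embIdx d j)
      · apply genmem _ _ k
        intro i
        rcases eq_or_ne i (embIdx d j) with h | h
        · subst h
          rw [Pi.add_apply, Pi.neg_apply, Pi.single_eq_same]
          have h2 := (hμ (embIdx d j)).2
          constructor <;> omega
        · rw [Pi.add_apply, Pi.neg_apply, Pi.single_eq_of_ne h, neg_zero, zero_add]
          exact hμ i
      · have hμ0 : μ (embIdx d j) = 0 := le_antisymm (by omega) (hμ (embIdx d j)).1
        set y := mono (-Pi.single (embIdx d j) 1 + μ) •
          (Submodule.Quotient.mk (Pi.single k 1) : (Fin q → LP n) ⧸ R) with hydef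
        have hvec : ∀ t : ℕ, Pi.single (embIdx d j) (t:ℤ) + (-Pi.single (embIdx d j) 1 + μ)
            = Pi.single (embIdx d j) ((t:ℤ) - 1) + μ := by
          intro t; funext i
          rcases eq_or_ne i (embIdx d j) with h | h
          · subst h; simp only [Pi.add_apply, Pi.neg_apply, Pi.single_eq_same]; ring
          · simp only [Pi.add_apply, Pi.neg_apply, Pi.single_eq_of_ne h, neg_zero, zero_add]
        have hsig : ∀ t : ℕ, (sigmaVar d j) ^ t • y
            = mono (Pi.single (embIdx d j) ((t:ℤ) - 1) + μ) •
              (Submodule.Quotient.mk (Pi.single k 1) : (Fin q → LP n) ⧸ R) := by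
          intro t
          rw [hydef, sig_pow_smul, hvec]
        have hLsplit : ∃ L', L j = L' + 1 := ⟨L j - 1, by have := hL j; omega⟩
        obtain ⟨L', hL'⟩ := hLsplit
        have hrel := hannM j y
        rw [hL', Finset.sum_range_succ'] at hrel
        -- hrel : σ^(L'+1) • y = -(∑ t ∈ range L', (a j (t+1) * σ^(t+1)) • y + (a j 0 * σ^0) • y)
        have ha0y : (a j 0 : LP n) • y ∈ N := by
          have h2 : (a j 0 : LP n) • y = ((a j 0 : LP n) * (sigmaVar d j) ^ 0) • y := by
            rw [pow_zero, mul_one]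
          have heq : ((a j 0 : LP n) * (sigmaVar d j) ^ 0) • y
              = -((sigmaVar d j) ^ (L j) • y)
                - ∑ t ∈ Finset.range L', ((a j (t+1) : LP n) * (sigmaVar d j) ^ (t+1)) • y := by
            rw [hL', hrel]
            abel
          rw [h2, heq]
          refine Submodule.sub_mem _ (Submodule.neg_mem _ ?_) (Submodule.sum_mem _ fun t ht => ?_)
          · rw [hsig (L j)]
            refine genmem _ ?_ k
            refine boxsingle j _ μ hμ hμ0 (by have := hL j; omega) (by omega)
          · rw [Finset.mem_range] at ht
            rw [mul_smul, hsig (t+1), coeS]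
            refine N.smul_mem _ (genmem _ ?_ k)
            refine boxsingle j _ μ hμ hμ0 (by omega) (by rw [hL']; push_cast; omega)
        have ha0y' : (a j 0) • y ∈ N := by rw [← coeS]; exact ha0y
        have hu := ha0 j
        have h3 : hu.unit • y = (a j 0) • y := by rw [Units.smul_def, hu.unit_spec]
        have hyeq : y = (hu.unit)⁻¹ • ((a j 0) • y) := by rw [← h3, inv_smul_smul]
        rw [hyeq, Units.smul_def]
        exact N.smul_mem _ ha0y'
    | zero => simpa using N.zero_mem
    | add y z _ _ ihy ihz => rw [smul_add]; exact N.add_mem ihy ihz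
    | smul s y _ ih =>
      rw [← coeS, ← mul_smul, mul_comm, mul_smul, coeS]
      exact N.smul_mem s ih
  -- closure under arbitrary integer powers of σ_{d+j}
  have intpow : ∀ (j : Fin (n - d)) (m : ℤ) (x : (Fin q → LP n) ⧸ R), x ∈ N →
      mono (Pi.single (embIdx d j) m) • x ∈ N := by
    intro j m
    induction m using Int.induction_on with
    | zero => intro x hx; simpa [mono_zero] using hx
    | succ k ih =>
      intro x hx
      have hsplit : (Pi.single (embIdx d j) ((k:ℤ)+1) : Fin n → ℤ)
          = (Pi.single (embIdx d j) (1:ℤ) : Fin n → ℤ) + Pi.single (embIdx d j) (k:ℤ) := by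
        rw [← Pi.single_add]; congr 1; ring
      rw [hsplit, ← mono_mul, mul_smul]
      exact up j _ (ih x hx)
    | pred k ih =>
      intro x hx
      have hsplit : (Pi.single (embIdx d j) (-(k:ℤ)-1) : Fin n → ℤ)
          = -(Pi.single (embIdx d j) (1:ℤ) : Fin n → ℤ) + Pi.single (embIdx d j) (-(k:ℤ)) := by
        rw [← Pi.single_neg, ← Pi.single_add]; congr 1; ring
      rw [hsplit, ← mono_mul, mul_smul]
      exact down j _ (ih x hx)
  -- closure under multiplication by any monomial supported on the tail variables
  have tailmem : ∀ (ν : Fin n → ℤ) (F : Finset (Fin (n - d))) (x : (Fin q → LP n) ⧸ R),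
      x ∈ N → mono (∑ j ∈ F, (Pi.single (embIdx d j) (ν (embIdx d j)) : Fin n → ℤ)) • x ∈ N := by
    intro ν F
    induction F using Finset.induction with
    | empty => intro x hx; simpa [mono_zero] using hx
    | @insert j F hj ih =>
      intro x hx
      rw [Finset.sum_insert hj, ← mono_mul, mul_smul]
      exact intpow j _ _ (ih x hx)
  -- closure under multiplication by any monomial
  have allmono : ∀ (ν : Fin n → ℤ) (x : (Fin q → LP n) ⧸ R), x ∈ N → mono ν • x ∈ N := by
    intro ν x hx
    have hdecomp : ν = (fun i : Fin n => if (i:ℕ) < d then ν i else 0)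
        + ∑ j : Fin (n - d), (Pi.single (embIdx d j) (ν (embIdx d j)) : Fin n → ℤ) := by
      funext i
      rw [Pi.add_apply, Finset.sum_apply]
      by_cases hi : (i:ℕ) < d
      · rw [if_pos hi]
        have hz2 : ∀ j : Fin (n - d),
            (Pi.single (embIdx d j) (ν (embIdx d j)) : Fin n → ℤ) i = 0 := by
          intro j
          apply Pi.single_eq_of_ne
          intro h
          rw [h] at hi
          simp only [embIdx] at hi
          omega
        rw [Finset.sum_congr rfl fun j _ => hz2 j]
        simp
      · rw [if_neg hi]
        have hlt : (i:ℕ) - d < n - d := hidx i hi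
        have hemb : embIdx d ⟨(i:ℕ) - d, hlt⟩ = i := by
          apply Fin.ext; simp [embIdx]; omega
        rw [Finset.sum_eq_single ⟨(i:ℕ) - d, hlt⟩]
        · rw [hemb, Pi.single_eq_same, zero_add]
        · intro j _ hji
          apply Pi.single_eq_of_ne
          intro h
          apply hji
          apply Fin.ext
          have h1 : ((embIdx d j : Fin n) : ℕ) = (i : ℕ) := by rw [h]
          simp only [embIdx] at h1
          simp
          omega
        · intro h
          exact absurd (Finset.mem_univ _) h
    have h2 : mono ν • x = (monoD n d ν : LP n) •
        (mono (∑ j : Fin (n - d), (Pi.single (embIdx d j) (ν (embIdx d j)) : Fin n → ℤ)) • x) := by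
      rw [← mul_smul,
        show ((monoD n d ν : subA n d) : LP n)
          = mono (fun i : Fin n => if (i:ℕ) < d then ν i else 0) from rfl, mono_mul, ← hdecomp]
    rw [h2, coeS]
    exact N.smul_mem _ (tailmem ν Finset.univ x hx)
  -- real scalars preserve N
  have creal : ∀ (c : ℝ) (y : (Fin q → LP n) ⧸ R), y ∈ N → c • y ∈ N := by
    intro c y hy
    rw [← algebraMap_smul (subA n d) c y]
    exact N.smul_mem _ hy
  -- N is everything
  have hNtop : N = ⊤ := by
    rw [eq_top_iff]
    intro x _
    obtain ⟨f, rfl⟩ := Submodule.Quotient.mk_surjective R x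
    have hf : (Submodule.Quotient.mk f : (Fin q → LP n) ⧸ R)
        = ∑ k, (f k) • (Submodule.Quotient.mk (Pi.single k 1) : (Fin q → LP n) ⧸ R) := by
      conv_lhs => rw [pi_eq_sum f]
      show R.mkQ _ = _
      rw [map_sum]
      exact Finset.sum_congr rfl fun k _ => R.mkQ.map_smul (f k) _
    rw [hf]
    refine Submodule.sum_mem _ fun k _ => ?_
    have base : (Submodule.Quotient.mk (Pi.single k 1) : (Fin q → LP n) ⧸ R) ∈ N := by
      have h0 := genmem 0 (fun i => ⟨le_refl 0, by show (0:ℤ) < (B i : ℤ); exact_mod_cast hBpos i⟩) k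
      simpa [mono_zero] using h0
    have hg : f k = Finsupp.sum (f k).coeff (fun ν c => c • mono ν) := by
      conv_lhs => rw [← AddMonoidAlgebra.sum_coeff_single (f k)]
      refine Finsupp.sum_congr fun ν _ => ?_
      rw [mono, AddMonoidAlgebra.smul_single, smul_eq_mul, mul_one]
    rw [hg, Finsupp.sum, Finset.sum_smul]
    refine Submodule.sum_mem _ fun ν _ => ?_
    rw [smul_assoc]
    exact creal _ _ (allmono ν _ base)
  exact ⟨hNtop ▸ Submodule.fg_span hGfin⟩

end Fin21
/-- Characterization of finite generation of `A^q/R` over `A_d` via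
monic polynomials in each `σ_{d+i}` with unit constant coefficient. -/
theorem stmt3 (n d q : ℕ) (R : Submodule (LP n) (Fin q → LP n)) :
    (Module.Finite (subA n d) ((Fin q → LP n) ⧸ R) ↔
      (∀ i : Fin (n - d), ∃ L : ℕ, 0 < L ∧ ∃ a : ℕ → subA n d, IsUnit (a 0) ∧
        (sigmaVar d i) ^ L + ∑ j ∈ Finset.range L, (a j : LP n) * (sigmaVar d i) ^ j
          ∈ annQ R)) ∧
    ((∀ i : Fin (n - d), ∃ L : ℕ, 0 < L ∧ ∃ a : ℕ → subA n d, IsUnit (a 0) ∧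
        (sigmaVar d i) ^ L + ∑ j ∈ Finset.range L, (a j : LP n) * (sigmaVar d i) ^ j
          ∈ annQ R) ↔
      (∀ i : Fin (n - d), ∃ L : ℕ, 0 < L ∧ ∃ a : ℕ → subA n d, IsUnit (a 0) ∧
        ∀ k : Fin q,
          ((sigmaVar d i) ^ L + ∑ j ∈ Finset.range L, (a j : LP n) * (sigmaVar d i) ^ j) •
            (Pi.single k 1 : Fin q → LP n) ∈ R)) := by
  refine ⟨⟨fun hfin i => dir12 hfin i, fun h => dir21 h⟩, ?_⟩
  constructor
  · intro h i
    obtain ⟨L, hL, a, ha, hmem⟩ := h i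
    exact ⟨L, hL, a, ha, fun k => mem_annQ_single.mp hmem k⟩
  · intro h i
    obtain ⟨L, hL, a, ha, hmem⟩ := h i
    exact ⟨L, hL, a, ha, mem_annQ_single.mpr hmem⟩
end
end

section
/- Let R ⊆ A^q be a submodule such that M = A^q/R is finitely generated as an A_d-module, with generating set {g₁,…,g_γ}, associated surjection ψ : A_d^γ → M, matrix of relations X(σ₁) ∈ A_d^{δ×γ}, companion matrices A₁(σ₁),…,A_{n−d}(σ₁) ∈ A_d^{γ×γ} each invertible over A_d, and output matrix C(σ₁) ∈ A_d^{q×γ}. Let f = Σ_{ν∈ℤⁿ} α_ν σ^ν ∈ A^q, where α_ν ∈ ℝ^{1×q} and only finitely many α_ν are nonzero. Then the following are equivalent: (1) f ∈ R; (2) the row vector Σ_{ν∈ℤⁿ} α_ν · (Π_{i=1}^{d} σ_i^{ν_i}) · C(σ₁) · Π_{j=1}^{n−d} A_j(σ₁)^{ν_{d+j}} ∈ A_d^γ lies in ker ψ; (3) there exists a matrix F(σ₁) ∈ A_d^{q×δ} such that Σ_{ν∈ℤⁿ} α_ν · (Π_{i=1}^{d} σ_i^{ν_i}) · C(σ₁)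 · Π_{j=1}^{n−d} A_j(σ₁)^{ν_{d+j}} = F(σ₁)·X(σ₁). -/
set_option synthInstance.maxHeartbeats 1000000
set_option maxHeartbeats 1000000

noncomputable section

namespace St4

lemma mono_mul {n} (a b : Fin n → ℤ) : mono a * mono b = mono (a+b) := by
  simp [mono, AddMonoidAlgebra.single_mul_single]

lemma mono_zero {n} : mono (0 : Fin n → ℤ) = 1 := rfl

def monoU {n : ℕ} (ν : Fin n → ℤ) : (LP n)ˣ :=
  ⟨mono ν, mono (-ν), by simp [mono_mul, mono_zero], by simp [mono_mul, mono_zero]⟩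

lemma monoU_mul {n} (a b : Fin n → ℤ) : monoU a * monoU b = monoU (a+b) :=
  Units.ext (mono_mul a b)

lemma monoU_zero {n} : monoU (0 : Fin n → ℤ) = 1 := Units.ext rfl

lemma monoU_inv {n} (a : Fin n → ℤ) : (monoU a)⁻¹ = monoU (-a) := Units.ext rfl

lemma monoU_zsmul {n} (a : Fin n → ℤ) (z : ℤ) : monoU (z • a) = (monoU a) ^ z := by
  induction z using Int.induction_on with
  | zero => simp [monoU_zero]
  | succ k ih =>
      rw [zpow_add_one, ← ih, monoU_mul]
      congr 1
      rw [add_smul, one_smul, add_comm]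
  | pred k ih =>
      rw [zpow_sub_one, ← ih, monoU_inv, monoU_mul]
      congr 1
      rw [sub_smul, one_smul, sub_eq_add_neg]

lemma mono_prod {n : ℕ} {ι : Type*} (s : Finset ι) (c : ι → Fin n → ℤ) :
    (∏ j ∈ s, mono (c j)) = mono (∑ j ∈ s, c j) := by
  classical
  induction s using Finset.induction with
  | empty => simp [mono_zero]
  | insert _ _ h ih => rw [Finset.prod_insert h, Finset.sum_insert h, ih, mono_mul]

lemma single_zsmul {n : ℕ} (i : Fin n) (z : ℤ) :
    z • (Pi.single i (1 : ℤ) : Fin n → ℤ) = Pi.single i z := by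
  funext k
  by_cases h : k = i <;> simp [Pi.single_apply, h]

/-- decomposition of ν into head and tail parts -/
lemma nu_decomp {n : ℕ} (d : ℕ) (ν : Fin n → ℤ) :
    (fun i : Fin n => if (i : ℕ) < d then ν i else 0)
      + (∑ j : Fin (n - d), (Pi.single (embIdx d j) (ν (embIdx d j)) : Fin n → ℤ)) = ν := by
  funext i
  rw [Pi.add_apply, Finset.sum_apply]
  by_cases h : (i : ℕ) < d
  · have : ∀ j : Fin (n - d), (Pi.single (embIdx d j) (ν (embIdx d j)) : Fin n → ℤ) i = 0 := by
      intro j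
      apply Pi.single_eq_of_ne
      intro hc
      rw [hc] at h
      simp [embIdx] at h
    simp [h, this]
  · have hi : (i:ℕ) < n := i.isLt
    have hlt : (i : ℕ) - d < n - d := by omega
    have hemb : embIdx d ⟨(i:ℕ) - d, hlt⟩ = i := by
      apply Fin.ext
      simp [embIdx]
      omega
    rw [Finset.sum_eq_single ⟨(i:ℕ) - d, hlt⟩]
    · rw [hemb]; simp [h]
    · intro j _ hj
      apply Pi.single_eq_of_ne
      intro hc
      apply hj
      apply Fin.ext
      have : (embIdx d j : ℕ) = (i:ℕ) := by rw [hc]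
      simp [embIdx] at this ⊢
      omega
    · simp

variable {n d γ : ℕ} {M : Type} [AddCommGroup M] [Module (LP n) M] (g : Fin γ → M)

def Good (u : LP n) (U : Matrix (Fin γ) (Fin γ) (subA n d)) : Prop :=
  ∀ i, u • g i = ∑ k, ((U i k : LP n)) • g k

lemma good_one : Good g (1 : LP n) (1 : Matrix (Fin γ) (Fin γ) (subA n d)) := by
  intro i
  have : ∀ k, (((1 : Matrix (Fin γ) (Fin γ) (subA n d)) i k : LP n)) • g k
      = (if i = k then g k else 0) := by
    intro k; by_cases h : i = k <;> simp [Matrix.one_apply, h]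
  simp [this]

lemma good_row {u : LP n} {U : Matrix (Fin γ) (Fin γ) (subA n d)} (h : Good g u U)
    (r : Fin γ → subA n d) :
    u • (∑ i, ((r i : LP n)) • g i) = ∑ i, ((Matrix.vecMul r U i : subA n d) : LP n) • g i := by
  rw [Finset.smul_sum]
  have : ∀ i, u • ((r i : LP n)) • g i = ∑ k, (((r i : LP n)) * (U i k : LP n)) • g k := by
    intro i
    rw [smul_comm, h i, Finset.smul_sum]
    exact Finset.sum_congr rfl fun k _ => by rw [smul_smul]
  rw [Finset.sum_congr rfl fun i _ => this i, Finset.sum_comm]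
  refine Finset.sum_congr rfl fun k _ => ?_
  rw [← Finset.sum_smul]
  congr 1
  simp [Matrix.vecMul, dotProduct]

lemma good_mul {u v : LP n} {U V : Matrix (Fin γ) (Fin γ) (subA n d)}
    (hu : Good g u U) (hv : Good g v V) : Good g (u * v) (U * V) := by
  intro i
  have h1 : (u * v) • g i = v • (u • g i) := by rw [mul_comm, mul_smul]
  rw [h1, hu i, good_row g hv]
  refine Finset.sum_congr rfl fun k _ => ?_
  rw [← Matrix.mul_apply_eq_vecMul]

lemma good_inv {u v : LP n} {U : (Matrix (Fin γ) (Fin γ) (subA n d))ˣ}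
    (h : Good g u (U : Matrix (Fin γ) (Fin γ) (subA n d))) (huv : v * u = 1) :
    Good g v ((U⁻¹ : (Matrix (Fin γ) (Fin γ) (subA n d))ˣ) : Matrix (Fin γ) (Fin γ) (subA n d)) := by
  intro i
  have key : u • (∑ k, (((↑U⁻¹ : Matrix (Fin γ) (Fin γ) (subA n d)) i k : LP n)) • g k) = g i := by
    rw [good_row g h]
    have : Matrix.vecMul ((↑U⁻¹ : Matrix (Fin γ) (Fin γ) (subA n d)) i) ↑U
        = (1 : Matrix (Fin γ) (Fin γ) (subA n d)) i := by
      rw [← Matrix.mul_apply_eq_vecMul, U.inv_mul]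
    rw [this]
    have : ∀ k, (((1 : Matrix (Fin γ) (Fin γ) (subA n d)) i k : LP n)) • g k
        = (if i = k then g k else 0) := by
      intro k; by_cases hh : i = k <;> simp [Matrix.one_apply, hh]
    simp [this]
  calc v • g i = v • u • (∑ k, (((↑U⁻¹ : Matrix (Fin γ) (Fin γ) (subA n d)) i k : LP n)) • g k) := by
        rw [key]
    _ = (v * u) • (∑ k, (((↑U⁻¹ : Matrix (Fin γ) (Fin γ) (subA n d)) i k : LP n)) • g k) := by
        rw [mul_smul]
    _ = _ := by rw [huv, one_smul]

lemma good_zpow {u : (LP n)ˣ} {U : (Matrix (Fin γ) (Fin γ) (subA n d))ˣ}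
    (h : Good g (u : LP n) (U : Matrix (Fin γ) (Fin γ) (subA n d))) (z : ℤ) :
    Good g ((u ^ z : (LP n)ˣ) : LP n)
      ((U ^ z : (Matrix (Fin γ) (Fin γ) (subA n d))ˣ) : Matrix (Fin γ) (Fin γ) (subA n d)) := by
  have hinv : Good g ((u⁻¹ : (LP n)ˣ) : LP n)
      ((U⁻¹ : (Matrix (Fin γ) (Fin γ) (subA n d))ˣ) : Matrix (Fin γ) (Fin γ) (subA n d)) :=
    good_inv g h (by rw [← Units.val_mul, inv_mul_cancel, Units.val_one])
  induction z using Int.induction_on with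
  | zero => simpa using good_one g
  | succ k ih =>
      rw [zpow_add_one, zpow_add_one, Units.val_mul, Units.val_mul]
      exact good_mul g ih h
  | pred k ih =>
      rw [zpow_sub_one, zpow_sub_one, Units.val_mul, Units.val_mul]
      exact good_mul g ih hinv

lemma good_list (L : List ((LP n) × Matrix (Fin γ) (Fin γ) (subA n d)))
    (h : ∀ p ∈ L, Good g p.1 p.2) :
    Good g (L.map Prod.fst).prod (L.map Prod.snd).prod := by
  induction L with
  | nil => simpa using good_one g
  | cons p L ih =>
      simp only [List.map_cons, List.prod_cons]
      exact good_mul g (h p (by simp)) (ih fun p hp => h p (by simp [hp]))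

lemma good_tail (A : Fin (n - d) → (Matrix (Fin γ) (Fin γ) (subA n d))ˣ)
    (hA : ∀ j : Fin (n - d), ∀ i : Fin γ,
      sigmaVar d j • g i = ∑ k, (((A j : Matrix (Fin γ) (Fin γ) (subA n d)) i k : LP n)) • g k)
    (ν : Fin n → ℤ) :
    Good g (mono (∑ j : Fin (n - d), (Pi.single (embIdx d j) (ν (embIdx d j)) : Fin n → ℤ)))
      (((List.ofFn fun j => A j ^ ν (embIdx d j)).prod :
          (Matrix (Fin γ) (Fin γ) (subA n d))ˣ) : Matrix (Fin γ) (Fin γ) (subA n d)) := by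
  have hs : ∀ j : Fin (n - d),
      Good g ((monoU (Pi.single (embIdx d j) 1) : (LP n)ˣ) : LP n)
        ((A j : Matrix (Fin γ) (Fin γ) (subA n d))) := fun j => hA j
  have hz : ∀ j : Fin (n - d),
      Good g ((monoU (Pi.single (embIdx d j) 1) ^ ν (embIdx d j) : (LP n)ˣ) : LP n)
        ((A j ^ ν (embIdx d j) : (Matrix (Fin γ) (Fin γ) (subA n d))ˣ) :
          Matrix (Fin γ) (Fin γ) (subA n d)) := fun j => good_zpow g (hs j) _
  have hl := good_list g
    (List.ofFn fun j : Fin (n - d) =>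
      (((monoU (Pi.single (embIdx d j) 1) ^ ν (embIdx d j) : (LP n)ˣ) : LP n),
        ((A j ^ ν (embIdx d j) : (Matrix (Fin γ) (Fin γ) (subA n d))ˣ) :
          Matrix (Fin γ) (Fin γ) (subA n d))))
    (by
      intro p hp
      rw [List.mem_ofFn] at hp
      obtain ⟨j, rfl⟩ := hp
      exact hz j)
  have e1 : ((List.ofFn fun j : Fin (n - d) =>
      (((monoU (Pi.single (embIdx d j) 1) ^ ν (embIdx d j) : (LP n)ˣ) : LP n),
        ((A j ^ ν (embIdx d j) : (Matrix (Fin γ) (Fin γ) (subA n d))ˣ) :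
          Matrix (Fin γ) (Fin γ) (subA n d)))).map Prod.fst).prod
      = mono (∑ j : Fin (n - d), (Pi.single (embIdx d j) (ν (embIdx d j)) : Fin n → ℤ)) := by
    rw [List.map_ofFn, List.prod_ofFn]
    rw [← mono_prod]
    refine Finset.prod_congr rfl fun j _ => ?_
    show ((monoU (Pi.single (embIdx d j) 1) ^ ν (embIdx d j) : (LP n)ˣ) : LP n)
        = mono (Pi.single (embIdx d j) (ν (embIdx d j)))
    rw [← monoU_zsmul]
    show mono ((ν (embIdx d j)) • (Pi.single (embIdx d j) (1:ℤ) : Fin n → ℤ)) = _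
    rw [single_zsmul]
  have e2 : ((List.ofFn fun j : Fin (n - d) =>
      (((monoU (Pi.single (embIdx d j) 1) ^ ν (embIdx d j) : (LP n)ˣ) : LP n),
        ((A j ^ ν (embIdx d j) : (Matrix (Fin γ) (Fin γ) (subA n d))ˣ) :
          Matrix (Fin γ) (Fin γ) (subA n d)))).map Prod.snd).prod
      = (((List.ofFn fun j => A j ^ ν (embIdx d j)).prod :
          (Matrix (Fin γ) (Fin γ) (subA n d))ˣ) : Matrix (Fin γ) (Fin γ) (subA n d)) := by
    rw [List.map_ofFn]
    have h2 : ((List.ofFn fun j => A j ^ ν (embIdx d j)).map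
          (Units.coeHom (Matrix (Fin γ) (Fin γ) (subA n d)))).prod
        = (((List.ofFn fun j => A j ^ ν (embIdx d j)).prod :
            (Matrix (Fin γ) (Fin γ) (subA n d))ˣ) : Matrix (Fin γ) (Fin γ) (subA n d)) :=
      ((Units.coeHom (Matrix (Fin γ) (Fin γ) (subA n d))).map_list_prod _).symm
    rw [← h2, List.map_ofFn]
    rfl
  rw [e1, e2] at hl
  exact hl

lemma single_eq_mul_mono {n : ℕ} (ν : Fin n → ℤ) (c : ℝ) :
    (AddMonoidAlgebra.single ν c : LP n) = algebraMap ℝ (LP n) c * mono ν := by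
  rw [AddMonoidAlgebra.coe_algebraMap]
  show _ = AddMonoidAlgebra.single 0 c * AddMonoidAlgebra.single ν 1
  rw [AddMonoidAlgebra.single_mul_single, zero_add, mul_one]


lemma main_sum {q : ℕ} (A : Fin (n - d) → (Matrix (Fin γ) (Fin γ) (subA n d))ˣ)
    (hA : ∀ j : Fin (n - d), ∀ i : Fin γ,
      sigmaVar d j • g i = ∑ k, (((A j : Matrix (Fin γ) (Fin γ) (subA n d)) i k : LP n)) • g k)
    (C : Matrix (Fin q) (Fin γ) (subA n d))
    (e : Fin q → M) (hC : ∀ i : Fin q, (∑ k, ((C i k : LP n)) • g k) = e i)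
    (α : (Fin n → ℤ) →₀ (Fin q → ℝ)) :
    (∑ i, (((∑ ν ∈ α.support, monoD n d ν •
          Matrix.vecMul (fun j : Fin q => algebraMap ℝ (subA n d) (α ν j))
            (C * (((List.ofFn fun j => A j ^ ν (embIdx d j)).prod :
                (Matrix (Fin γ) (Fin γ) (subA n d))ˣ) :
              Matrix (Fin γ) (Fin γ) (subA n d)))) i : subA n d) : LP n) • g i)
      = ∑ ν ∈ α.support, mono ν •
          ∑ j, algebraMap ℝ (LP n) (α ν j) • e j := by
  classical
  set P : (Fin n → ℤ) → Matrix (Fin γ) (Fin γ) (subA n d) := fun ν =>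
    (((List.ofFn fun j => A j ^ ν (embIdx d j)).prod :
        (Matrix (Fin γ) (Fin γ) (subA n d))ˣ) : Matrix (Fin γ) (Fin γ) (subA n d)) with hP
  set aR : (Fin n → ℤ) → Fin q → subA n d := fun ν j => algebraMap ℝ (subA n d) (α ν j) with haR
  -- Step A : exchange sums and pull out monoD
  have h1 : ∀ i : Fin γ, (((∑ ν ∈ α.support, monoD n d ν •
        Matrix.vecMul (aR ν) (C * P ν)) i : subA n d) : LP n) • g i
      = ∑ ν ∈ α.support, (monoD n d ν : LP n) •
          (((Matrix.vecMul (aR ν) (C * P ν) i : subA n d) : LP n) • g i) := by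
    intro i
    rw [Finset.sum_apply, AddSubmonoidClass.coe_finset_sum, Finset.sum_smul]
    refine Finset.sum_congr rfl fun ν _ => ?_
    rw [Pi.smul_apply, smul_eq_mul, MulMemClass.coe_mul, mul_smul]
  rw [Finset.sum_congr rfl fun i _ => h1 i, Finset.sum_comm]
  refine Finset.sum_congr rfl fun ν hν => ?_
  rw [← Finset.smul_sum]
  -- vecMul associativity
  have hvm : Matrix.vecMul (aR ν) (C * P ν) = Matrix.vecMul (Matrix.vecMul (aR ν) C) (P ν) :=
    (Matrix.vecMul_vecMul _ C (P ν)).symm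
  rw [hvm, ← good_row g (good_tail g A hA ν) (Matrix.vecMul (aR ν) C)]
  have hmono : (monoD n d ν : LP n) *
      mono (∑ j : Fin (n - d), (Pi.single (embIdx d j) (ν (embIdx d j)) : Fin n → ℤ)) = mono ν := by
    show mono _ * mono _ = mono ν
    rw [mono_mul, nu_decomp]
  rw [← mul_smul, hmono]
  congr 1
  -- inner sum : ∑ i ↑(vecMul (aR ν) C i) • g i = ∑ j aLP ν j • e j
  have h2 : ∀ i : Fin γ, ((Matrix.vecMul (aR ν) C i : subA n d) : LP n) • g i
      = ∑ j, (algebraMap ℝ (LP n) (α ν j) * (C j i : LP n)) • g i := by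
    intro i
    rw [← Finset.sum_smul]
    congr 1
    show ((Matrix.vecMul (aR ν) C i : subA n d) : LP n) = _
    rw [show Matrix.vecMul (aR ν) C i = ∑ j, aR ν j * C j i by
      simp [Matrix.vecMul, dotProduct]]
    rw [AddSubmonoidClass.coe_finset_sum]
    refine Finset.sum_congr rfl fun j _ => ?_
    rw [MulMemClass.coe_mul]
    rfl
  rw [Finset.sum_congr rfl fun i _ => h2 i, Finset.sum_comm]
  refine Finset.sum_congr rfl fun j _ => ?_
  rw [← hC j, Finset.smul_sum]
  refine Finset.sum_congr rfl fun i _ => ?_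
  rw [mul_smul]

end St4

/-- Membership test for the equation module via the matrices
`X(σ₁)`, `A_j(σ₁)`, `C(σ₁)`. -/
theorem stmt4 (n d q γ δ : ℕ) (R : Submodule (LP n) (Fin q → LP n))
    (hfg : Module.Finite (subA n d) ((Fin q → LP n) ⧸ R))
    (g : Fin γ → (Fin q → LP n) ⧸ R)
    (hgen : Submodule.span (subA n d) (Set.range g) = ⊤)
    (X : Matrix (Fin δ) (Fin γ) (subA n d))
    (hX : ∀ r : Fin γ → subA n d,
      (∑ i, r i • g i) = 0 ↔ r ∈ Submodule.span (subA n d) (Set.range fun i : Fin δ => X i))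
    (A : Fin (n - d) → (Matrix (Fin γ) (Fin γ) (subA n d))ˣ)
    (hA : ∀ j : Fin (n - d), ∀ i : Fin γ,
      sigmaVar d j • g i = ∑ k, ((A j : Matrix (Fin γ) (Fin γ) (subA n d)) i k) • g k)
    (C : Matrix (Fin q) (Fin γ) (subA n d))
    (hC : ∀ i : Fin q, (∑ k, C i k • g k) =
      Submodule.Quotient.mk (Pi.single i 1 : Fin q → LP n))
    (f : Fin q → LP n) (α : (Fin n → ℤ) →₀ (Fin q → ℝ))
    (hf : ∀ j : Fin q, f j = ∑ ν ∈ α.support, AddMonoidAlgebra.single ν (α ν j)) :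
    ((f ∈ R) ↔
      (∑ i, (∑ ν ∈ α.support, monoD n d ν •
          Matrix.vecMul (fun j : Fin q => algebraMap ℝ (subA n d) (α ν j))
            (C * (((List.ofFn fun j => A j ^ ν (embIdx d j)).prod :
                (Matrix (Fin γ) (Fin γ) (subA n d))ˣ) :
              Matrix (Fin γ) (Fin γ) (subA n d)))) i • g i) = 0) ∧
    ((f ∈ R) ↔
      ∃ F : Fin δ → subA n d,
        (∑ ν ∈ α.support, monoD n d ν •
          Matrix.vecMul (fun j : Fin q => algebraMap ℝ (subA n d) (α ν j))
            (C * (((List.ofFn fun j => A j ^ ν (embIdx d j)).prod :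
                (Matrix (Fin γ) (Fin γ) (subA n d))ˣ) :
              Matrix (Fin γ) (Fin γ) (subA n d)))) = Matrix.vecMul F X) := by
  classical
  set S : Fin γ → subA n d := ∑ ν ∈ α.support, monoD n d ν •
      Matrix.vecMul (fun j : Fin q => algebraMap ℝ (subA n d) (α ν j))
        (C * (((List.ofFn fun j => A j ^ ν (embIdx d j)).prod :
            (Matrix (Fin γ) (Fin γ) (subA n d))ˣ) :
          Matrix (Fin γ) (Fin γ) (subA n d))) with hS
  have hA' : ∀ j : Fin (n - d), ∀ i : Fin γ,
      sigmaVar d j • g i = ∑ k, (((A j : Matrix (Fin γ) (Fin γ) (subA n d)) i k : LP n)) • g k :=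
    hA
  have hC' : ∀ i : Fin q, (∑ k, ((C i k : LP n)) • g k) =
      (Submodule.Quotient.mk (Pi.single i 1 : Fin q → LP n) : (Fin q → LP n) ⧸ R) := hC
  have hmain := St4.main_sum g A hA' C
    (fun i => (Submodule.Quotient.mk (Pi.single i 1 : Fin q → LP n) : (Fin q → LP n) ⧸ R)) hC' α
  rw [← hS] at hmain
  -- computation of mk f
  have hmkf : (Submodule.Quotient.mk f : (Fin q → LP n) ⧸ R)
      = ∑ ν ∈ α.support, mono ν • ∑ j, algebraMap ℝ (LP n) (α ν j) •
          (Submodule.Quotient.mk (Pi.single j 1 : Fin q → LP n) : (Fin q → LP n) ⧸ R) := by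
    have hf2 : f = ∑ j, f j • (Pi.single j 1 : Fin q → LP n) := by
      funext i
      rw [Finset.sum_apply]
      have : ∀ j : Fin q, (f j • (Pi.single j 1 : Fin q → LP n)) i
          = if i = j then f j else 0 := by
        intro j
        by_cases h : i = j <;> simp [Pi.single_apply, h]
      rw [Finset.sum_congr rfl fun j _ => this j, Finset.sum_ite_eq]
      simp
    have step1 : (Submodule.Quotient.mk f : (Fin q → LP n) ⧸ R)
        = ∑ j, f j • (Submodule.Quotient.mk (Pi.single j 1 : Fin q → LP n) : (Fin q → LP n) ⧸ R) := by
      show R.mkQ f = ∑ j, f j • R.mkQ (Pi.single j 1 : Fin q → LP n)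
      rw [show R.mkQ f = R.mkQ (∑ j, f j • (Pi.single j 1 : Fin q → LP n)) from congrArg _ hf2,
        map_sum]
      exact Finset.sum_congr rfl fun j _ => map_smul R.mkQ _ _
    rw [step1]
    have step2 : ∀ j : Fin q,
        f j • (Submodule.Quotient.mk (Pi.single j 1 : Fin q → LP n) : (Fin q → LP n) ⧸ R)
        = ∑ ν ∈ α.support, (algebraMap ℝ (LP n) (α ν j) * mono ν) •
            (Submodule.Quotient.mk (Pi.single j 1 : Fin q → LP n) : (Fin q → LP n) ⧸ R) := by
      intro j
      rw [hf j, Finset.sum_smul]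
      exact Finset.sum_congr rfl fun ν _ => by rw [St4.single_eq_mul_mono]
    rw [Finset.sum_congr rfl fun j _ => step2 j, Finset.sum_comm]
    refine Finset.sum_congr rfl fun ν _ => ?_
    rw [Finset.smul_sum]
    refine Finset.sum_congr rfl fun j _ => ?_
    rw [mul_comm, mul_smul]
  have key : (∑ i, S i • g i) = (Submodule.Quotient.mk f : (Fin q → LP n) ⧸ R) := by
    rw [hmkf]
    exact hmain
  have iff1 : (f ∈ R) ↔ (∑ i, S i • g i) = 0 := by
    rw [key]
    exact (Submodule.Quotient.mk_eq_zero R).symm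
  refine ⟨iff1, ?_⟩
  rw [iff1, hX S]
  rw [Submodule.mem_span_range_iff_exists_fun]
  constructor
  · rintro ⟨c, hc⟩
    refine ⟨c, ?_⟩
    rw [← hc]
    funext k
    rw [Finset.sum_apply]
    simp [Matrix.vecMul, dotProduct]
  · rintro ⟨F, hF⟩
    refine ⟨F, ?_⟩
    rw [hF]
    funext k
    rw [Finset.sum_apply]
    simp [Matrix.vecMul, dotProduct]
end
end

section
/- Let {0} ≠ a ⊆ A be a nonzero ideal. Then there exists a ℤ-unimodular matrix T ∈ ℤ^{n×n} such that the canonical ring homomorphism A_{n−1}/(φ_T(a) ∩ A_{n−1}) → A/φ_T(a) is injective and integral; equivalently, A/φ_T(a) contains A_{n−1}/(φ_T(a) ∩ A_{n−1}) as a subring and A/φ_T(a) is a finitely generated module over A_{n−1}/(φ_T(a) ∩ A_{n−1}). -/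
set_option synthInstance.maxHeartbeats 1000000
set_option maxHeartbeats 1000000

noncomputable section

namespace Stmt7Aux

open Polynomial

lemma mono_add {n : ℕ} (a b : Fin n → ℤ) : mono (a + b) = mono a * mono b := by
  simp [mono, AddMonoidAlgebra.single_mul_single]

lemma mono_zero {n : ℕ} : mono (0 : Fin n → ℤ) = 1 := rfl

lemma mono_nsmul {n : ℕ} (k : ℕ) (a : Fin n → ℤ) : mono (k • a) = (mono a)^k := by
  induction k with
  | zero => simp [mono_zero]
  | succ k ih => rw [succ_nsmul, mono_add, ih, pow_succ]

lemma baseM (M : ℤ) (hM : 0 < M) : ∀ (N : ℕ) (e : ℕ → ℤ), (∀ i, |e i| < M) →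
    (∑ i ∈ Finset.range N, M ^ i * e i = 0) → ∀ i < N, e i = 0 := by
  intro N
  induction N with
  | zero => intro e _ _ i hi; omega
  | succ N ih =>
    intro e he hsum i hi
    rw [Finset.sum_range_succ'] at hsum
    have h1 : ∑ i ∈ Finset.range N, M ^ (i+1) * e (i+1)
        = M * ∑ i ∈ Finset.range N, M ^ i * e (i+1) := by
      rw [Finset.mul_sum]; congr 1; funext j; ring
    have he0 : e 0 = - (M * ∑ i ∈ Finset.range N, M ^ i * e (i+1)) := by
      rw [← h1]; linarith [hsum]
    set s := ∑ i ∈ Finset.range N, M ^ i * e (i+1) with hs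
    have hs0 : s = 0 := by
      by_contra h
      have : M ≤ |e 0| := by
        rw [he0, abs_neg, abs_mul, abs_of_pos hM]
        nlinarith [abs_pos.mpr h, abs_nonneg s]
      linarith [he 0]
    have he00 : e 0 = 0 := by rw [he0, hs0]; ring
    rcases Nat.eq_zero_or_pos i with h0 | h0
    · rw [h0]; exact he00
    · obtain ⟨j, rfl⟩ : ∃ j, i = j + 1 := ⟨i - 1, by omega⟩
      exact ih (fun k => e (k+1)) (fun k => he (k+1)) (by rw [← hs, hs0]) j (by omega)

lemma key (m : ℕ) (I : Ideal (LP (m+1))) (g : LP (m+1)) (hg : g ∈ I)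
    (ν₀ : Fin (m+1) → ℤ) (hν₀ : ν₀ ∈ g.coeff.support) (ε : ℤ) (hε : ε * ε = 1)
    (hmax : ∀ μ ∈ g.coeff.support, μ ≠ ν₀ → ε * μ (Fin.last m) < ε * ν₀ (Fin.last m)) :
    RingHom.IsIntegralElem (R := subA (m+1) m ⧸ Ideal.comap (subA (m+1) m).val.toRingHom I) (A := LP (m+1) ⧸ I) (Ideal.quotientMap I (subA (m+1) m).val.toRingHom le_rfl)
      (Ideal.Quotient.mk I (mono (Pi.single (Fin.last m) ε))) := by
  classical
  set lst := Fin.last m with hlst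
  set c : ℝ := g.coeff ν₀ with hcdef
  have hc : c ≠ 0 := Finsupp.mem_support_iff.mp hν₀
  set k : (Fin (m+1) → ℤ) → ℕ := fun μ => (ε * (ν₀ lst - μ lst)).toNat with hkdef
  have hknn : ∀ μ ∈ g.coeff.support, 0 ≤ ε * (ν₀ lst - μ lst) := by
    intro μ hμ
    by_cases h : μ = ν₀
    · subst h; simp
    · have := hmax μ hμ h; nlinarith [this]
  have hkz : ∀ μ ∈ g.coeff.support, (k μ : ℤ) = ε * (ν₀ lst - μ lst) := fun μ hμ =>
    Int.toNat_of_nonneg (hknn μ hμ)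
  set N : ℕ := g.coeff.support.sup k with hNdef
  have hkN : ∀ μ ∈ g.coeff.support, k μ ≤ N := fun μ hμ => Finset.le_sup hμ
  set j : (Fin (m+1) → ℤ) → ℕ := fun μ => N - k μ with hjdef
  set u : LP (m+1) := mono (Pi.single lst ε) with hudef
  set a : (Fin (m+1) → ℤ) → subA (m+1) m :=
    fun μ => (c⁻¹ * g.coeff μ) • monoD (m+1) m (μ - ν₀) with hadef
  set p : Polynomial (subA (m+1) m) := ∑ μ ∈ g.coeff.support, C (a μ) * X ^ (j μ) with hpdef
  -- j μ = N iff μ = ν₀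
  have hkν₀ : k ν₀ = 0 := by simp [hkdef]
  have hjν₀ : j ν₀ = N := by simp [hjdef, hkν₀]
  have hjne : ∀ μ ∈ g.coeff.support, μ ≠ ν₀ → j μ ≠ N := by
    intro μ hμ hne
    have h1 : 0 < ε * (ν₀ lst - μ lst) := by
      have := hmax μ hμ hne; nlinarith
    have h2 : 0 < k μ := by
      have := hkz μ hμ; omega
    have := hkN μ hμ
    simp only [hjdef]; omega
  have haν₀ : a ν₀ = 1 := by
    apply Subtype.ext
    show (c⁻¹ * c) • (mono (fun i => if (i:ℕ) < m then (ν₀ - ν₀) i else 0) : LP (m+1)) = 1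
    have : (fun i : Fin (m+1) => if (i:ℕ) < m then (ν₀ - ν₀) i else 0) = 0 := by
      funext i; simp
    rw [this, mono_zero, inv_mul_cancel₀ hc, one_smul]
  -- coeff N = 1
  have hcoeff : p.coeff N = 1 := by
    rw [hpdef, Polynomial.finset_sum_coeff]
    rw [Finset.sum_eq_single ν₀]
    · simp [coeff_C_mul, coeff_X_pow, hjν₀, haν₀]
    · intro μ hμ hne
      simp [coeff_C_mul, coeff_X_pow, (hjne μ hμ hne).symm]
    · intro h; exact absurd hν₀ h
  have hmonic : p.Monic := by
    apply monic_of_natDegree_le_of_coeff_eq_one N _ hcoeff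
    apply Polynomial.natDegree_sum_le_of_forall_le
    intro μ _
    exact (natDegree_C_mul_X_pow_le _ _).trans (Nat.sub_le _ _)
  -- the evaluation
  set ρ : Fin (m+1) → ℤ := N • Pi.single lst ε - ν₀ with hρdef
  have hexp : ∀ μ ∈ g.coeff.support,
      ((fun i : Fin (m+1) => if (i:ℕ) < m then (μ - ν₀) i else 0) + j μ • Pi.single lst ε)
        = ρ + μ := by
    intro μ hμ
    have hjz : (j μ : ℤ) = (N : ℤ) - (k μ : ℤ) := by
      have := hkN μ hμ; simp only [hjdef]; omega
    funext i
    by_cases hi : (i:ℕ) < m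
    · have hne : i ≠ lst := by
        intro h; rw [h] at hi; simp [hlst] at hi
      simp only [Pi.add_apply, Pi.sub_apply, Pi.smul_apply, Pi.single_eq_of_ne hne,
        smul_zero, hρdef]
      rw [if_pos hi]; ring
    · have hieq : i = lst := by
        apply Fin.ext; simp only [hlst, Fin.val_last]
        have := i.isLt; omega
      subst hieq
      simp only [Pi.add_apply, Pi.sub_apply, Pi.smul_apply, Pi.single_eq_same, hρdef]
      rw [if_neg hi]
      have h1 := hkz μ hμ
      have h2 : (j μ : ℤ) * ε = (N:ℤ) * ε - (ε * ε) * (ν₀ lst - μ lst) := by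
        have hjz : (j μ : ℤ) = (N : ℤ) - (k μ : ℤ) := by
          have := hkN μ hμ; simp only [hjdef]; omega
        rw [hjz, h1]; ring
      rw [hε] at h2
      simp only [nsmul_eq_mul]
      linarith
  have heval : eval₂ (subA (m+1) m).val.toRingHom u p = mono ρ * (c⁻¹ • g) := by
    rw [hpdef, Polynomial.eval₂_finset_sum]
    conv_rhs => rw [← AddMonoidAlgebra.sum_coeff_single g, Finsupp.sum]
    rw [Finset.smul_sum, Finset.mul_sum]
    refine Finset.sum_congr rfl (fun μ hμ => ?_)
    rw [Polynomial.eval₂_mul, Polynomial.eval₂_C, Polynomial.eval₂_X_pow]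
    have hval : (subA (m+1) m).val.toRingHom (a μ)
        = (c⁻¹ * g.coeff μ) • (mono (fun i : Fin (m+1) => if (i:ℕ) < m then (μ - ν₀) i else 0) : LP (m+1)) := rfl
    rw [hval, hudef, ← mono_nsmul, smul_mul_assoc, ← mono_add, hexp μ hμ]
    have hsingle : AddMonoidAlgebra.single μ (g.coeff μ) = (g.coeff μ) • (mono μ : LP (m+1)) := by
      rw [mono, AddMonoidAlgebra.smul_single', mul_one]
    rw [hsingle, smul_smul, mul_smul_comm, ← mono_add]
  refine ⟨p.map (Ideal.Quotient.mk _), hmonic.map _, ?_⟩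
  rw [Polynomial.eval₂_map, Ideal.quotientMap_comp_mk le_rfl, ← Polynomial.hom_eval₂, heval]
  refine Ideal.Quotient.eq_zero_iff_mem.mpr ?_
  refine I.mul_mem_left _ ?_
  rw [Algebra.smul_def]
  exact I.mul_mem_left _ hg


lemma integral_of_units (m : ℕ) (I : Ideal (LP (m+1)))
    (hu : RingHom.IsIntegralElem (R := subA (m+1) m ⧸ Ideal.comap (subA (m+1) m).val.toRingHom I) (A := LP (m+1) ⧸ I) (Ideal.quotientMap I (subA (m+1) m).val.toRingHom le_rfl)
      (Ideal.Quotient.mk I (mono (Pi.single (Fin.last m) 1))))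
    (hu' : RingHom.IsIntegralElem (R := subA (m+1) m ⧸ Ideal.comap (subA (m+1) m).val.toRingHom I) (A := LP (m+1) ⧸ I) (Ideal.quotientMap I (subA (m+1) m).val.toRingHom le_rfl)
      (Ideal.Quotient.mk I (mono (Pi.single (Fin.last m) (-1))))) :
    RingHom.IsIntegral (R := subA (m+1) m ⧸ Ideal.comap (subA (m+1) m).val.toRingHom I) (A := LP (m+1) ⧸ I) (Ideal.quotientMap I (subA (m+1) m).val.toRingHom le_rfl) := by
  classical
  set f := Ideal.quotientMap I (subA (m+1) m).val.toRingHom le_rfl with hf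
  letI : Algebra ((subA (m+1) m) ⧸ (I.comap (subA (m+1) m).val.toRingHom)) (LP (m+1) ⧸ I) :=
    f.toAlgebra
  set Q1 := (subA (m+1) m) ⧸ (I.comap (subA (m+1) m).val.toRingHom)
  have hrange : ∀ x : LP (m+1), x ∈ subA (m+1) m →
      Ideal.Quotient.mk I x ∈ integralClosure Q1 (LP (m+1) ⧸ I) := by
    intro x hx
    have h1 : Ideal.Quotient.mk I x = f (Ideal.Quotient.mk _ (⟨x, hx⟩ : subA (m+1) m)) := by
      rw [hf, Ideal.quotientMap_mk]; rfl
    rw [h1]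
    exact Subalgebra.algebraMap_mem _ _
  have hsingvar : ∀ t : ℤ, Ideal.Quotient.mk I (mono (Pi.single (Fin.last m) t))
      ∈ integralClosure Q1 (LP (m+1) ⧸ I) := by
    intro t
    rcases le_or_gt 0 t with h | h
    · have : Pi.single (Fin.last m) t = (t.toNat • Pi.single (Fin.last m) (1:ℤ) : Fin (m+1) → ℤ) := by
        rw [← Pi.single_smul]; simp; omega
      rw [this, mono_nsmul, map_pow]
      exact pow_mem hu _
    · have : Pi.single (Fin.last m) t = ((-t).toNat • Pi.single (Fin.last m) (-1:ℤ) : Fin (m+1) → ℤ) := by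
        rw [← Pi.single_smul]; simp; omega
      rw [this, mono_nsmul, map_pow]
      exact pow_mem hu' _
  have hall : ∀ y : LP (m+1), Ideal.Quotient.mk I y ∈ integralClosure Q1 (LP (m+1) ⧸ I) := by
    intro y
    induction y using AddMonoidAlgebra.induction with
    | zero => rw [map_zero]; exact zero_mem _
    | single_add a b y _ _ ih =>
      rw [map_add]
      refine add_mem ?_ ih
      have hdecomp : AddMonoidAlgebra.single a b =
          AddMonoidAlgebra.single (0 : Fin (m+1) → ℤ) b
          * mono (fun i => if (i:ℕ) < m then a i else 0)
          * mono (Pi.single (Fin.last m) (a (Fin.last m))) := by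
        rw [mono, mono, AddMonoidAlgebra.single_mul_single, AddMonoidAlgebra.single_mul_single]
        rw [mul_one, mul_one]
        congr 1
        funext i
        by_cases hi : (i:ℕ) < m
        · have hne : i ≠ Fin.last m := by
            intro h; rw [h] at hi; simp at hi
          simp [Pi.single_eq_of_ne hne, hi]
        · have hieq : i = Fin.last m := by
            apply Fin.ext; simp only [Fin.val_last]; have := i.isLt; omega
          subst hieq
          simp [hi]
      rw [hdecomp, map_mul, map_mul]
      refine mul_mem (mul_mem ?_ ?_) (hsingvar _)
      · refine hrange _ ?_
        have : AddMonoidAlgebra.single (0 : Fin (m+1) → ℤ) b = algebraMap ℝ (LP (m+1)) b := rfl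
        rw [this]
        exact Subalgebra.algebraMap_mem _ _
      · exact hrange _ (Algebra.subset_adjoin ⟨_, fun i hi => if_neg (by omega), rfl⟩)
  intro x
  obtain ⟨y, rfl⟩ := Ideal.Quotient.mk_surjective x
  exact hall y


end Stmt7Aux

/-- One-step normalization for a nonzero ideal: after a unimodular
change of coordinates, `A_{n-1}/(φ_T(a) ∩ A_{n-1}) → A/φ_T(a)` is injective and
integral. -/

theorem stmt7 (n : ℕ) (a : Ideal (LP n)) (ha : a ≠ ⊥) :
    ∃ T : Matrix (Fin n) (Fin n) ℤ, Unimodular T ∧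
      Function.Injective
        (Ideal.quotientMap (Ideal.map (phiT T).toRingHom a)
          (subA n (n - 1)).val.toRingHom le_rfl) ∧
      RingHom.IsIntegral (R := subA n (n - 1) ⧸ Ideal.comap (subA n (n - 1)).val.toRingHom (Ideal.map (phiT T).toRingHom a)) (A := LP n ⧸ Ideal.map (phiT T).toRingHom a)
        (Ideal.quotientMap (Ideal.map (phiT T).toRingHom a)
          (subA n (n - 1)).val.toRingHom le_rfl) := by
  cases n with
  | zero =>
    refine ⟨1, Or.inl (Matrix.det_one), ?_⟩
    obtain ⟨x, hx, hx0⟩ := Submodule.exists_mem_ne_zero_of_ne_bot ha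
    have hx00 : x.coeff 0 ≠ 0 := by
      intro h
      apply hx0
      refine AddMonoidAlgebra.coeff_injective (Finsupp.ext fun ν => ?_)
      rw [Subsingleton.elim ν 0, h]; rfl
    have hxeq : x = AddMonoidAlgebra.single (0 : Fin 0 → ℤ) (x.coeff 0) := by
      refine AddMonoidAlgebra.coeff_injective (Finsupp.ext fun ν => ?_)
      rw [Subsingleton.elim ν 0]
      simp
    have hunit : IsUnit x := by
      refine IsUnit.of_mul_eq_one (a := x) (AddMonoidAlgebra.single 0 (x.coeff 0)⁻¹) ?_
      nth_rewrite 1 [hxeq]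
      rw [AddMonoidAlgebra.single_mul_single, add_zero, mul_inv_cancel₀ hx00]
      rfl
    have htop : Ideal.map (phiT 1).toRingHom a = ⊤ :=
      Ideal.eq_top_of_isUnit_mem _ (Ideal.mem_map_of_mem _ hx) (hunit.map _)
    haveI : Subsingleton (LP 0 ⧸ Ideal.map (phiT 1).toRingHom a) := by
      rw [Ideal.Quotient.subsingleton_iff]; exact htop
    refine ⟨Ideal.quotientMap_injective, ?_⟩
    intro z
    exact ⟨Polynomial.X, Polynomial.monic_X,
      by rw [Polynomial.eval₂_X]; exact Subsingleton.elim _ _⟩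
  | succ m =>
    classical
    obtain ⟨f, hf, hf0⟩ := Submodule.exists_mem_ne_zero_of_ne_bot ha
    set B : ℕ := f.coeff.support.sup (fun ν => Finset.univ.sup (fun i => (ν i).natAbs)) with hB
    have hbound : ∀ ν ∈ f.coeff.support, ∀ i, (ν i).natAbs ≤ B := fun ν hν i =>
      le_trans (Finset.le_sup (f := fun i => (ν i).natAbs) (Finset.mem_univ i))
        (Finset.le_sup (f := fun ν => Finset.univ.sup fun i => (ν i).natAbs) hν)
    set M : ℤ := 2*(B:ℤ) + 1 with hM
    have hMpos : 0 < M := by positivity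
    set c : Fin (m+1) → ℤ := fun j => if j = Fin.last m then 1 else M^((j:ℕ)+1) with hc
    set ρ := finRotate (m+1) with hρ
    have hcM : ∀ j, c j = M ^ ((ρ j : Fin (m+1)) : ℕ) := by
      intro j
      by_cases h : j = Fin.last m
      · subst h; simp [hc, hρ, finRotate_last]
      · rw [hc]
        simp only [if_neg h]
        congr 1
        rw [hρ, finRotate_succ_apply, Fin.val_add_one]
        rw [if_neg h]
    set L : (Fin (m+1) → ℤ) → ℤ := fun ν => ∑ j, c j * ν j with hL
    have hLinj : ∀ ν ∈ f.coeff.support, ∀ μ ∈ f.coeff.support, L ν = L μ → ν = μ := by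
      intro ν hν μ hμ hLeq
      set d : (Fin (m+1)) → ℤ := fun j => ν j - μ j with hd
      set e : ℕ → ℤ := fun t => if h : t < m+1 then d (ρ.symm ⟨t, h⟩) else 0 with he
      have hde : ∀ j : Fin (m+1), |d j| < M := by
        intro j
        have h1 : |ν j| ≤ (B:ℤ) := by
          rw [Int.abs_eq_natAbs]; exact_mod_cast hbound ν hν j
        have h2 : |μ j| ≤ (B:ℤ) := by
          rw [Int.abs_eq_natAbs]; exact_mod_cast hbound μ hμ j
        have h1' := abs_le.mp h1
        have h2' := abs_le.mp h2
        have hdj : d j = ν j - μ j := rfl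
        rw [abs_lt, hdj, hM]
        constructor <;> linarith [h1'.1, h1'.2, h2'.1, h2'.2]
      have heM : ∀ t, |e t| < M := by
        intro t
        simp only [he]
        by_cases h : t < m+1
        · rw [dif_pos h]; exact hde _
        · rw [dif_neg h]; simpa using hMpos
      have hsum0 : ∑ i ∈ Finset.range (m+1), M ^ i * e i = 0 := by
        have hfin : ∑ i ∈ Finset.range (m+1), M ^ i * e i
            = ∑ i : Fin (m+1), M ^ (i:ℕ) * e (i:ℕ) :=
          (Fin.sum_univ_eq_sum_range (fun t => M ^ t * e t) (m+1)).symm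
        rw [hfin]
        have h2 : ∀ i : Fin (m+1), M ^ (i:ℕ) * e (i:ℕ) = M ^ (i:ℕ) * d (ρ.symm i) := by
          intro i
          simp only [he, dif_pos i.isLt]
        rw [Finset.sum_congr rfl (fun i _ => h2 i)]
        have h3 : ∑ i : Fin (m+1), M ^ (i:ℕ) * d (ρ.symm i)
            = ∑ j : Fin (m+1), M ^ ((ρ j : Fin (m+1)) : ℕ) * d (ρ.symm (ρ j)) :=
          (Equiv.sum_comp ρ (fun i => M ^ (i:ℕ) * d (ρ.symm i))).symm
        rw [h3]
        simp only [Equiv.symm_apply_apply]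
        have h5 : ∑ j : Fin (m+1), M ^ ((ρ j : Fin (m+1)) : ℕ) * d j = ∑ j, c j * d j :=
          Finset.sum_congr rfl (fun j _ => by rw [hcM j])
        rw [h5]
        have h4 : ∑ j, c j * d j = 0 := by
          simp only [hd, mul_sub]
          rw [Finset.sum_sub_distrib]
          have : L ν - L μ = 0 := by rw [hLeq]; ring
          simpa [hL] using this
        exact h4
      have hzero := Stmt7Aux.baseM M hMpos (m+1) e heM hsum0
      funext j
      have hj := hzero ((ρ j : Fin (m+1)) : ℕ) (ρ j).isLt
      simp only [he, dif_pos (ρ j).isLt] at hj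
      have heta : d (ρ.symm ⟨((ρ j : Fin (m+1)) : ℕ), (ρ j).isLt⟩) = d j := by
        congr 1
        rw [Fin.eta, Equiv.symm_apply_apply]
      rw [heta] at hj
      have : ν j - μ j = 0 := hj
      linarith
    -- the matrix T
    set T : Matrix (Fin (m+1)) (Fin (m+1)) ℤ :=
      Matrix.of fun i j : Fin (m+1) => if i = Fin.last m then c j else if i = j then 1 else 0
      with hT
    have hdet : T.det = 1 := by
      rw [Matrix.det_of_lowerTriangular]
      · rw [Finset.prod_eq_one]
        intro i _
        by_cases h : i = Fin.last m <;> simp [hT, Matrix.of_apply, h, hc]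
      · intro i j hij
        have hij' : (i : Fin (m+1)) < j := hij
        have hne : i ≠ Fin.last m := fun h => (Fin.le_last j).not_gt (h ▸ hij')
        simp [hT, Matrix.of_apply, hne, Fin.ne_of_lt hij']
    have hmv : ∀ ν : Fin (m+1) → ℤ, T.mulVec ν (Fin.last m) = L ν := by
      intro ν
      simp only [Matrix.mulVec, dotProduct, hT, Matrix.of_apply, eq_self_iff_true, if_true, hL]
    refine ⟨T, Or.inl hdet, Ideal.quotientMap_injective, ?_⟩
    set I : Ideal (LP (m+1)) := Ideal.map (phiT T).toRingHom a with hI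
    set g : LP (m+1) := phiT T f with hgdef
    have hgI : g ∈ I := Ideal.mem_map_of_mem _ hf
    have hgmap : g.coeff = Finsupp.mapDomain T.mulVec f.coeff := rfl
    have hTinj : Set.InjOn T.mulVec f.coeff.support := by
      intro ν hν μ hμ hmveq
      refine hLinj ν hν μ hμ ?_
      rw [← hmv ν, ← hmv μ, hmveq]
    have hsupp : g.coeff.support = f.coeff.support.image T.mulVec := by
      rw [hgmap]
      exact Finsupp.mapDomain_support_of_injOn f.coeff hTinj
    have hlastinj : ∀ w ∈ g.coeff.support, ∀ w' ∈ g.coeff.support,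
        w (Fin.last m) = w' (Fin.last m) → w = w' := by
      intro w hw w' hw' hlast
      rw [hsupp] at hw hw'
      obtain ⟨ν, hν, rfl⟩ := Finset.mem_image.mp hw
      obtain ⟨μ, hμ, rfl⟩ := Finset.mem_image.mp hw'
      rw [hmv ν, hmv μ] at hlast
      rw [hLinj ν hν μ hμ hlast]
    have hgne : g.coeff.support.Nonempty := by
      rw [hsupp]
      exact Finset.Nonempty.image (Finsupp.support_nonempty_iff.mpr (AddMonoidAlgebra.coeff_eq_zero.not.mpr hf0)) _
    obtain ⟨ν₀, hν₀, hν₀max⟩ := Finset.exists_max_image g.coeff.support (fun w => w (Fin.last m)) hgne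
    obtain ⟨ν₁, hν₁, hν₁min⟩ := Finset.exists_min_image g.coeff.support (fun w => w (Fin.last m)) hgne
    have hu : RingHom.IsIntegralElem (R := subA (m+1) m ⧸ Ideal.comap (subA (m+1) m).val.toRingHom I) (A := LP (m+1) ⧸ I) (Ideal.quotientMap I (subA (m+1) m).val.toRingHom le_rfl)
        (Ideal.Quotient.mk I (mono (Pi.single (Fin.last m) 1))) := by
      refine Stmt7Aux.key m I g hgI ν₀ hν₀ 1 (by norm_num) ?_
      intro μ hμ hne
      simp only [one_mul]
      refine lt_of_le_of_ne (hν₀max μ hμ) ?_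
      intro h
      exact hne (hlastinj μ hμ ν₀ hν₀ h)
    have hu' : RingHom.IsIntegralElem (R := subA (m+1) m ⧸ Ideal.comap (subA (m+1) m).val.toRingHom I) (A := LP (m+1) ⧸ I) (Ideal.quotientMap I (subA (m+1) m).val.toRingHom le_rfl)
        (Ideal.Quotient.mk I (mono (Pi.single (Fin.last m) (-1)))) := by
      refine Stmt7Aux.key m I g hgI ν₁ hν₁ (-1) (by norm_num) ?_
      intro μ hμ hne
      have h1 := hν₁min μ hμ
      have h2 : ν₁ (Fin.last m) ≠ μ (Fin.last m) := by
        intro h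
        exact hne (hlastinj μ hμ ν₁ hν₁ h.symm)
      have : ν₁ (Fin.last m) < μ (Fin.last m) := lt_of_le_of_ne h1 h2
      linarith
    exact Stmt7Aux.integral_of_units m I hu hu'
end
end

section
/- For every submodule R ⊆ A^q and every ℤ-unimodular matrix T ∈ ℤ^{n×n}, one has Φ_T(B(R)) = B(φ̂_{T^{-1}}(R)). -/
set_option synthInstance.maxHeartbeats 1000000
set_option maxHeartbeats 1000000

noncomputable section

lemma actS_zero' {n : ℕ} (w : (Fin n → ℤ) → ℝ) : actS (0 : LP n) w = 0 := by
  funext ν; simp [actS]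

lemma actS_w_zero {n : ℕ} (f : LP n) : actS f (0 : (Fin n → ℤ) → ℝ) = 0 := by
  funext ν; simp [actS]

lemma actS_add_left {n : ℕ} (f g : LP n) (w : (Fin n → ℤ) → ℝ) :
    actS (f + g) w = actS f w + actS g w := by
  funext ν
  simp only [actS, Pi.add_apply, AddMonoidAlgebra.coeff_add]
  rw [Finsupp.sum_add_index'] <;> simp [add_mul]

lemma actS_add_right {n : ℕ} (f : LP n) (u v : (Fin n → ℤ) → ℝ) :
    actS f (u + v) = actS f u + actS f v := by
  funext ν
  simp [actS, mul_add, Finsupp.sum_add]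

lemma actS_single {n : ℕ} (a : Fin n → ℤ) (b : ℝ) (w : (Fin n → ℤ) → ℝ) :
    actS (AddMonoidAlgebra.single a b) w = fun ν => b * w (ν + a) := by
  funext ν
  simp [actS, Finsupp.sum_single_index]

lemma actS_mul {n : ℕ} (f g : LP n) (w : (Fin n → ℤ) → ℝ) :
    actS (f * g) w = actS f (actS g w) := by
  induction f using AddMonoidAlgebra.induction_linear with
  | zero => simp [actS_zero']
  | add f f' hf hf' => rw [add_mul, actS_add_left, actS_add_left, hf, hf']
  | single a b =>
    induction g using AddMonoidAlgebra.induction_linear with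
    | zero => simp [actS_zero', actS_w_zero]
    | add g g' hg hg' =>
      rw [mul_add, actS_add_left, actS_add_left, actS_add_right, hg, hg']
    | single a' b' =>
      rw [AddMonoidAlgebra.single_mul_single, actS_single, actS_single, actS_single]
      funext ν
      simp [add_assoc, mul_assoc]

lemma actS_finsum {n : ℕ} (c : LP n) {ι : Type*} (s : Finset ι)
    (u : ι → (Fin n → ℤ) → ℝ) (ν : Fin n → ℤ) :
    actS c (fun μ => ∑ j ∈ s, u j μ) ν = ∑ j ∈ s, actS c (u j) ν := by
  simp only [actS, Finsupp.sum, Finset.mul_sum]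
  exact Finset.sum_comm

lemma actRow_zero {n q : ℕ} (w : (Fin n → ℤ) → Fin q → ℝ) :
    actRow (0 : Fin q → LP n) w = 0 := by
  funext ν; simp [actRow, actS]

lemma actRow_add {n q : ℕ} (r r' : Fin q → LP n) (w : (Fin n → ℤ) → Fin q → ℝ) :
    actRow (r + r') w = actRow r w + actRow r' w := by
  funext ν
  simp [actRow, actS_add_left, Finset.sum_add_distrib]

lemma actRow_smul {n q : ℕ} (c : LP n) (r : Fin q → LP n) (w : (Fin n → ℤ) → Fin q → ℝ) :
    actRow (c • r) w = actS c (actRow r w) := by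
  funext ν
  simp only [actRow, Pi.smul_apply, smul_eq_mul, actS_mul]
  exact (actS_finsum c Finset.univ (fun j => actS (r j) fun μ => w μ j) ν).symm

lemma mem_behavior_span {n q : ℕ} (S : Set (Fin q → LP n)) (w : (Fin n → ℤ) → Fin q → ℝ)
    (h : ∀ r ∈ S, actRow r w = 0) :
    ∀ r ∈ Submodule.span (LP n) S, actRow r w = 0 := by
  intro r hr
  induction hr using Submodule.span_induction with
  | mem x hx => exact h x hx
  | zero => exact actRow_zero w
  | add x y _ _ hx hy => rw [actRow_add, hx, hy, add_zero]
  | smul c x _ hx => rw [actRow_smul, hx, actS_w_zero]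

lemma phiT_apply {n : ℕ} (T : Matrix (Fin n) (Fin n) ℤ) (f : LP n) :
    phiT T f = AddMonoidAlgebra.ofCoeff (Finsupp.mapDomain T.mulVec f.coeff) := rfl

lemma actS_phiT {n : ℕ} (T : Matrix (Fin n) (Fin n) ℤ) (f : LP n)
    (w : (Fin n → ℤ) → ℝ) (ν : Fin n → ℤ) :
    actS (phiT T f) w (T.mulVec ν) = actS f (fun μ => w (T.mulVec μ)) ν := by
  rw [phiT_apply]
  unfold actS
  rw [AddMonoidAlgebra.coeff_ofCoeff, Finsupp.sum_mapDomain_index (by simp) (by intros; rw [add_mul])]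
  apply Finsupp.sum_congr
  intro a _
  simp [Matrix.mulVec_add]

lemma phiT_phiT {n : ℕ} (T S : Matrix (Fin n) (Fin n) ℤ) (hTS : T * S = 1) (f : LP n) :
    phiT T (phiT S f) = f := by
  rw [phiT_apply, phiT_apply, AddMonoidAlgebra.coeff_ofCoeff, ← Finsupp.mapDomain_comp]
  have : (T.mulVec ∘ S.mulVec : (Fin n → ℤ) → (Fin n → ℤ)) = id := by
    funext x
    simp [Matrix.mulVec_mulVec, hTS, Matrix.one_mulVec]
  rw [this, Finsupp.mapDomain_id, AddMonoidAlgebra.ofCoeff_coeff]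

/-- Pull-back of a behavior: `Φ_T(B(R)) = B(φ̂_{T⁻¹}(R))`. -/
theorem stmt13 (n q : ℕ) (T : Matrix (Fin n) (Fin n) ℤ) (hT : Unimodular T)
    (R : Submodule (LP n) (Fin q → LP n)) :
    (fun (w : (Fin n → ℤ) → Fin q → ℝ) (ν : Fin n → ℤ) => w (T.mulVec ν)) '' Behavior R =
      Behavior (hatPhiT T⁻¹ R) := by
  have hdet : IsUnit T.det := by
    rcases hT with h | h <;> rw [h]
    · exact isUnit_one
    · exact isUnit_one.neg
  have hTS : T * T⁻¹ = 1 := Matrix.mul_nonsing_inv T hdet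
  have hST : T⁻¹ * T = 1 := Matrix.nonsing_inv_mul T hdet
  ext v
  constructor
  · rintro ⟨w, hw, rfl⟩
    apply mem_behavior_span
    rintro r' ⟨r, hrR, rfl⟩
    funext ν
    have key : ∀ j, actS (phiT T⁻¹ (r j)) (fun μ => w (T.mulVec μ) j) ν
        = actS (r j) (fun μ => w μ j) (T.mulVec ν) := by
      intro j
      have := actS_phiT T (phiT T⁻¹ (r j)) (fun μ => w μ j) ν
      rw [phiT_phiT T T⁻¹ hTS] at this
      exact this.symm
    have h0 := hw r hrR
    calc actRow (fun i => phiT T⁻¹ (r i)) (fun ν => w (T.mulVec ν)) ν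
        = ∑ j, actS (r j) (fun μ => w μ j) (T.mulVec ν) := by
          unfold actRow; exact Finset.sum_congr rfl (fun j _ => key j)
      _ = actRow r w (T.mulVec ν) := rfl
      _ = 0 := by rw [h0]; rfl
  · intro hv
    refine ⟨fun ν => v (T⁻¹.mulVec ν), ?_, ?_⟩
    · intro r hrR
      funext ν
      have h0 : actRow (fun i => phiT T⁻¹ (r i)) v = 0 :=
        hv _ (Submodule.subset_span ⟨r, hrR, rfl⟩)
      calc actRow r (fun μ => v (T⁻¹.mulVec μ)) ν
          = ∑ j, actS (phiT T⁻¹ (r j)) (fun μ => v μ j) (T⁻¹.mulVec ν) := by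
            unfold actRow
            exact Finset.sum_congr rfl (fun j _ => (actS_phiT T⁻¹ (r j) (fun μ => v μ j) ν).symm)
        _ = actRow (fun i => phiT T⁻¹ (r i)) v (T⁻¹.mulVec ν) := rfl
        _ = 0 := by rw [h0]; rfl
    · funext ν
      simp [Matrix.mulVec_mulVec, hST, Matrix.one_mulVec]
end
end
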